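/- arXiv:1601.02263 — 5 statements merged into one kernel-verified Lean document; each statement's English description precedes it below -/
import Mathlib

section
/- Suppose f is an even analytic function on a simply connected domain D containing 0, μ ∈ ℂ, and the sequences of analytic functions A_s, B_s on D are defined by A_0 = 1, 2B_s(z) = −A_s'(z) + ∫_0^z (f(t)A_s(t) − ((2μ+1)/t) A_s'(t)) dt, and 2A_{s+1}(z) = ((2μ+1)/z) B_s(z) − B_s'(z) + ∫ f(z)B_s(z) dz with A_{s+1}(0) = 0. Then for every s ≥ 0, A_s is an even function and B_s is an odd function on D. -/
open Filter Set

/-- Two functions continuous at `0` that agree on a punctured neighborhood agree at `0`. -/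
private lemma eq_at_zero_of_punctured {g h : ℂ → ℂ} (hg : ContinuousAt g 0)
    (hh : ContinuousAt h 0) (he : ∀ᶠ z in nhdsWithin (0:ℂ) {(0:ℂ)}ᶜ, g z = h z) :
    g 0 = h 0 := by
  have t1 : Tendsto g (nhdsWithin (0:ℂ) {(0:ℂ)}ᶜ) (nhds (g 0)) :=
    hg.continuousWithinAt.tendsto
  have t2 : Tendsto g (nhdsWithin (0:ℂ) {(0:ℂ)}ᶜ) (nhds (h 0)) :=
    (hh.continuousWithinAt.tendsto).congr' (he.mono fun z hz => hz.symm)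
  exact tendsto_nhds_unique t1 t2

/-- An analytic function on an open preconnected set containing `0` whose derivative
vanishes on the set is constant. -/
private lemma const_of_deriv_zero {D : Set ℂ} {g : ℂ → ℂ} (hD : IsOpen D)
    (hconn : IsPreconnected D) (h0 : (0:ℂ) ∈ D) (hg : AnalyticOnNhd ℂ g D)
    (hd : ∀ z ∈ D, deriv g z = 0) : ∀ z ∈ D, g z = g 0 := by
  obtain ⟨ε, hε, hball⟩ := Metric.isOpen_iff.1 hD 0 h0
  have hconst : ∀ z ∈ Metric.ball (0:ℂ) ε, g z = g 0 := by
    intro z hz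
    refine (convex_ball (0:ℂ) ε).is_const_of_fderivWithin_eq_zero
      (fun w hw => (hg w (hball hw)).differentiableAt.differentiableWithinAt) ?_ hz
      (Metric.mem_ball_self hε)
    intro w hw
    rw [fderivWithin_of_isOpen Metric.isOpen_ball hw]
    have hda := (hg w (hball hw)).differentiableAt.hasDerivAt
    rw [hd w (hball hw)] at hda
    have := hda.hasFDerivAt.fderiv
    rw [this]
    ext v
    simp
  have hev : g =ᶠ[nhds (0:ℂ)] (fun _ => g 0) :=
    eventually_of_mem (Metric.ball_mem_nhds 0 hε) hconst
  exact fun z hz =>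
    hg.eqOn_of_preconnected_of_eventuallyEq analyticOnNhd_const hconn h0 hev hz

/-- Derivative of an even function on a symmetric open set is odd. -/
private lemma deriv_even {D : Set ℂ} {F : ℂ → ℂ} (hD : IsOpen D)
    (he : ∀ z ∈ D, F (-z) = F z) : ∀ z ∈ D, deriv F (-z) = -deriv F z := by
  intro z hz
  have hev : (fun w => F (-w)) =ᶠ[nhds z] F :=
    eventually_of_mem (hD.mem_nhds hz) he
  have := hev.deriv_eq
  rw [deriv_comp_neg] at this
  linear_combination -this

/-- Derivative of an odd function on a symmetric open set is even. -/
private lemma deriv_odd {D : Set ℂ} {F : ℂ → ℂ} (hD : IsOpen D)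
    (ho : ∀ z ∈ D, F (-z) = -F z) : ∀ z ∈ D, deriv F (-z) = deriv F z := by
  intro z hz
  have hev : (fun w => F (-w)) =ᶠ[nhds z] (fun w => -F w) :=
    eventually_of_mem (hD.mem_nhds hz) ho
  have h1 := hev.deriv_eq
  rw [deriv_comp_neg, deriv.fun_neg] at h1
  linear_combination -h1

/-- Olver's recursion: `A_0 = 1`,
`2B_s(z) = -A_s'(z) + ∫_0^z (f(t)A_s(t) - ((2μ+1)/t)A_s'(t)) dt`, and
`2A_{s+1}(z) = ((2μ+1)/z)B_s(z) - B_s'(z) + ∫ f(z)B_s(z) dz`, where the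
antiderivative `P` of `f·B_s` is chosen to vanish at `0`.  The integral
equation for `B_s` is encoded by its differentiated form on `D \ {0}`
together with its value at `z = 0`. -/
theorem olver_recursion_even_odd (D : Set ℂ) (f : ℂ → ℂ) (μ : ℂ)
    (A B : ℕ → ℂ → ℂ)
    (hD : IsOpen D) (hDconn : IsPreconnected D) (hDsc : SimplyConnectedSpace D)
    (hD0 : (0 : ℂ) ∈ D) (hDsymm : ∀ z ∈ D, -z ∈ D)
    (hf : AnalyticOnNhd ℂ f D) (hfe : ∀ z ∈ D, f (-z) = f z)
    (hAanal : ∀ s, AnalyticOnNhd ℂ (A s) D)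
    (hBanal : ∀ s, AnalyticOnNhd ℂ (B s) D)
    (hA0 : ∀ z, A 0 z = 1)
    (hrecB : ∀ s, ∀ z ∈ D, z ≠ 0 →
      2 * deriv (B s) z =
        -(deriv (deriv (A s)) z) + f z * A s z - ((2 * μ + 1) / z) * deriv (A s) z)
    (hrecB0 : ∀ s, 2 * B s 0 = -(deriv (A s) 0))
    (hrecA : ∀ s, ∃ P : ℂ → ℂ, AnalyticOnNhd ℂ P D ∧ P 0 = 0 ∧
      (∀ z ∈ D, deriv P z = f z * B s z) ∧
      ∀ z ∈ D, z ≠ 0 →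
        2 * A (s + 1) z = ((2 * μ + 1) / z) * B s z - deriv (B s) z + P z) :
    ∀ s, (∀ z ∈ D, A s (-z) = A s z) ∧ (∀ z ∈ D, B s (-z) = -(B s z)) := by
  -- punctured-neighborhood membership of D \ {0}
  have hpunct : ∀ {g : ℂ → ℂ}, (∀ z ∈ D, z ≠ 0 → g z = 0) →
      ∀ᶠ z in nhdsWithin (0:ℂ) {(0:ℂ)}ᶜ, g z = 0 := by
    intro g hgz
    filter_upwards [self_mem_nhdsWithin,
      mem_nhdsWithin_of_mem_nhds (hD.mem_nhds hD0)] with z hz1 hz2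
    exact hgz z hz2 hz1
  -- Key step: if A s is even then B s is odd.
  have keyB : ∀ s, (∀ z ∈ D, A s (-z) = A s z) → ∀ z ∈ D, B s (-z) = -(B s z) := by
    intro s hAe
    have hA'odd : ∀ z ∈ D, deriv (A s) (-z) = -deriv (A s) z := deriv_even hD hAe
    have hA''even : ∀ z ∈ D, deriv (deriv (A s)) (-z) = deriv (deriv (A s)) z :=
      deriv_odd hD hA'odd
    set g : ℂ → ℂ := fun z => B s z + B s (-z) with hg_def
    have hganal : AnalyticOnNhd ℂ g D := fun z hz =>
      (hBanal s z hz).add ((hBanal s (-z) (hDsymm z hz)).comp (analyticAt_id.neg))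
    have hderivg : ∀ z ∈ D, deriv g z = deriv (B s) z - deriv (B s) (-z) := by
      intro z hz
      have h1 : DifferentiableAt ℂ (B s) z := (hBanal s z hz).differentiableAt
      have h2 : DifferentiableAt ℂ (fun w => B s (-w)) z :=
        ((hBanal s (-z) (hDsymm z hz)).differentiableAt).comp z
          (differentiable_neg z)
      rw [hg_def]
      rw [deriv_fun_add h1 h2, deriv_comp_neg]
      ring
    have hB'sym : ∀ z ∈ D, z ≠ 0 → deriv (B s) (-z) = deriv (B s) z := by
      intro z hz hz0
      have e1 := hrecB s z hz hz0
      have e2 := hrecB s (-z) (hDsymm z hz) (neg_ne_zero.2 hz0)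
      rw [hA''even z hz, hfe z hz, hAe z hz, hA'odd z hz] at e2
      have hmul : (2 * μ + 1) / (-z) * -deriv (A s) z
          = (2 * μ + 1) / z * deriv (A s) z := by
        rw [div_neg]; ring
      rw [hmul] at e2
      have : (2:ℂ) * deriv (B s) (-z) = 2 * deriv (B s) z := by
        rw [e1, e2]
      exact mul_left_cancel₀ two_ne_zero this
    have hdg0 : ∀ z ∈ D, deriv g z = 0 := by
      intro z hz
      by_cases hz0 : z = 0
      · subst hz0
        have hcont : ContinuousAt (deriv g) 0 :=
          (hganal.deriv 0 hD0).continuousAt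
        have := eq_at_zero_of_punctured hcont continuousAt_const
          (hpunct (fun z hz hz0 => by
            rw [hderivg z hz, hB'sym z hz hz0, sub_self]))
        simpa using this
      · rw [hderivg z hz, hB'sym z hz hz0, sub_self]
    have hconst := const_of_deriv_zero hD hDconn hD0 hganal hdg0
    have hA'0 : deriv (A s) 0 = 0 := by
      have := hA'odd 0 hD0
      rw [neg_zero] at this
      have h2 : (2:ℂ) * deriv (A s) 0 = 0 := by linear_combination this
      exact (mul_eq_zero.mp h2).resolve_left two_ne_zero
    have hB0 : B s 0 = 0 := by
      have h2 := hrecB0 s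
      rw [hA'0, neg_zero] at h2
      exact (mul_eq_zero.mp h2).resolve_left two_ne_zero
    have hg0 : g 0 = 0 := by
      simp only [hg_def, neg_zero, hB0, add_zero]
    intro z hz
    have := hconst z hz
    rw [hg0] at this
    simp only [hg_def] at this
    exact eq_neg_of_add_eq_zero_left (by linear_combination this)
  -- Key step: if B s is odd then A (s+1) is even.
  have keyA : ∀ s, (∀ z ∈ D, B s (-z) = -(B s z)) → ∀ z ∈ D, A (s+1) (-z) = A (s+1) z := by
    intro s hBo
    obtain ⟨P, hPanal, hP0, hP', hPrec⟩ := hrecA s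
    -- P is even
    have hPe : ∀ z ∈ D, P (-z) = P z := by
      set q : ℂ → ℂ := fun z => P (-z) - P z with hq_def
      have hqanal : AnalyticOnNhd ℂ q D := fun z hz =>
        ((hPanal (-z) (hDsymm z hz)).comp analyticAt_id.neg).sub (hPanal z hz)
      have hdq : ∀ z ∈ D, deriv q z = 0 := by
        intro z hz
        have h1 : DifferentiableAt ℂ (fun w => P (-w)) z :=
          ((hPanal (-z) (hDsymm z hz)).differentiableAt).comp z (differentiable_neg z)
        have h2 : DifferentiableAt ℂ P z := (hPanal z hz).differentiableAt
        rw [hq_def]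
        rw [deriv_fun_sub h1 h2, deriv_comp_neg, hP' z hz,
          hP' (-z) (hDsymm z hz), hfe z hz, hBo z hz]
        ring
      have hconst := const_of_deriv_zero hD hDconn hD0 hqanal hdq
      intro z hz
      have := hconst z hz
      simp only [hq_def, neg_zero, sub_self] at this
      exact sub_eq_zero.mp this
    have hB'even : ∀ z ∈ D, deriv (B s) (-z) = deriv (B s) z :=
      deriv_odd hD hBo
    have hne : ∀ z ∈ D, z ≠ 0 → A (s+1) (-z) - A (s+1) z = 0 := by
      intro z hz hz0
      have e1 := hPrec z hz hz0
      have e2 := hPrec (-z) (hDsymm z hz) (neg_ne_zero.2 hz0)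
      rw [hBo z hz, hB'even z hz, hPe z hz] at e2
      have hmul : (2 * μ + 1) / (-z) * -(B s z) = (2 * μ + 1) / z * B s z := by
        rw [div_neg]; ring
      rw [hmul] at e2
      have : (2:ℂ) * A (s+1) (-z) = 2 * A (s+1) z := by rw [e1, e2]
      have := mul_left_cancel₀ (two_ne_zero (α := ℂ)) this
      rw [this, sub_self]
    intro z hz
    by_cases hz0 : z = 0
    · subst hz0; rw [neg_zero]
    · exact sub_eq_zero.mp (hne z hz hz0)
  intro s
  induction s with
  | zero =>
    have hAe : ∀ z ∈ D, A 0 (-z) = A 0 z := fun z _ => by rw [hA0, hA0]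
    exact ⟨hAe, keyB 0 hAe⟩
  | succ n ih =>
    have hAe := keyA n (ih.2)
    exact ⟨hAe, keyB (n+1) hAe⟩
end

section
/- Let A_s, B_s be the normalized solution of the Olver recursion (A_0 = 1, A_s(0) = 0 for s ≥ 1) with respect to an even analytic function f on a disk about 0. If Â_s, B̂_s is any other solution of the same recursion with Â_0 = 1, then for all s ≥ 0: Â_s(z) = Σ_{r=0}^s A_r(z)·Â_{s−r}(0) and B̂_s(z) = Σ_{r=0}^s B_r(z)·Â_{s−r}(0). -/
open Metric Filter Topology

private lemma olver_deriv_congr {U : Set ℂ} (hU : IsOpen U) {g h : ℂ → ℂ}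
    (he : ∀ x ∈ U, g x = h x) {z : ℂ} (hz : z ∈ U) : deriv g z = deriv h z :=
  Filter.EventuallyEq.deriv_eq (Filter.eventuallyEq_of_mem (hU.mem_nhds hz) he)

private lemma olver_deriv_sum_mul {n : ℕ} {g : ℕ → ℂ → ℂ} {c : ℕ → ℂ} {z : ℂ}
    (hg : ∀ r ∈ Finset.range n, DifferentiableAt ℂ (g r) z) :
    deriv (fun y => ∑ r ∈ Finset.range n, g r y * c r) z
      = ∑ r ∈ Finset.range n, deriv (g r) z * c r := by
  rw [deriv_fun_sum (fun r hr => (hg r hr).mul_const _)]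
  exact Finset.sum_congr rfl fun r hr => deriv_mul_const (hg r hr) _

private lemma olver_const_of_deriv_zero {R : ℝ} {g : ℂ → ℂ} (hR : 0 < R)
    (hg : DifferentiableOn ℂ g (Metric.ball 0 R))
    (h0 : ∀ z ∈ Metric.ball (0:ℂ) R, deriv g z = 0) :
    ∀ z ∈ Metric.ball (0:ℂ) R, g z = g 0 := by
  intro z hz
  refine (convex_ball (0:ℂ) R).is_const_of_fderivWithin_eq_zero hg ?_ hz
    (Metric.mem_ball_self hR)
  intro x hx
  rw [fderivWithin_of_isOpen Metric.isOpen_ball hx, ← toSpanSingleton_deriv, h0 x hx]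
  ext
  simp

private lemma olver_eq_of_punctured {R : ℝ} {g : ℂ → ℂ} {k : ℂ} (hR : 0 < R)
    (hg : ContinuousAt g 0)
    (h : ∀ z ∈ Metric.ball (0:ℂ) R, z ≠ 0 → g z = k) : g 0 = k := by
  have h1 : Tendsto g (𝓝[≠] (0:ℂ)) (𝓝 (g 0)) :=
    (hg.tendsto).mono_left nhdsWithin_le_nhds
  have hb : ∀ᶠ z in 𝓝 (0:ℂ), z ∈ Metric.ball (0:ℂ) R :=
    Metric.isOpen_ball.mem_nhds (Metric.mem_ball_self hR)
  have h2 : ∀ᶠ z in 𝓝[≠] (0:ℂ), g z = k := by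
    filter_upwards [eventually_nhdsWithin_of_eventually_nhds hb, self_mem_nhdsWithin]
      with z hz hz'
    exact h z hz hz'
  have h3 : Tendsto g (𝓝[≠] (0:ℂ)) (𝓝 k) :=
    Tendsto.congr' (Filter.EventuallyEq.symm h2) tendsto_const_nhds
  exact tendsto_nhds_unique h1 h3



/-- A pair of sequences of analytic functions `A_s`, `B_s` on `D` satisfying
Olver's recursion with parameter `μ` attached to the function `f`:
`A_0 = 1`, `2B_s(z) = -A_s'(z) + ∫_0^z (f(t)A_s(t) - ((2μ+1)/t)A_s'(t)) dt`
(encoded by its differentiated form on `D \ {0}` together with the value at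
`z = 0`), and `2A_{s+1}(z) = ((2μ+1)/z)B_s(z) - B_s'(z) + P(z)` where `P` is
some (arbitrary) analytic antiderivative of `f·B_s` on `D`. -/
structure OlverSolution (D : Set ℂ) (f : ℂ → ℂ) (μ : ℂ) (A B : ℕ → ℂ → ℂ) : Prop where
  analA : ∀ s, AnalyticOnNhd ℂ (A s) D
  analB : ∀ s, AnalyticOnNhd ℂ (B s) D
  A_zero : ∀ z, A 0 z = 1
  recB : ∀ s, ∀ z ∈ D, z ≠ 0 →
    2 * deriv (B s) z =
      -(deriv (deriv (A s)) z) + f z * A s z - ((2 * μ + 1) / z) * deriv (A s) z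
  recB₀ : ∀ s, 2 * B s 0 = -(deriv (A s) 0)
  recA : ∀ s, ∃ P : ℂ → ℂ, AnalyticOnNhd ℂ P D ∧
    (∀ z ∈ D, deriv P z = f z * B s z) ∧
    ∀ z ∈ D, z ≠ 0 →
      2 * A (s + 1) z = ((2 * μ + 1) / z) * B s z - deriv (B s) z + P z

/-- Lemma 5.1 of the paper: any solution `Â, B̂` of the Olver recursion with
`Â_0 = 1` is obtained from the normalized solution (`A_0 = 1`, `A_s(0) = 0`
for `s ≥ 1`) by `Â_s(z) = ∑_{r=0}^s A_r(z) Â_{s-r}(0)` and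
`B̂_s(z) = ∑_{r=0}^s B_r(z) Â_{s-r}(0)`. -/
theorem olver_solution_formula (R : ℝ) (hR : 0 < R) (f : ℂ → ℂ) (μ : ℂ)
    (hf : AnalyticOnNhd ℂ f (Metric.ball 0 R))
    (hfe : ∀ z ∈ Metric.ball (0 : ℂ) R, f (-z) = f z)
    (A B Ah Bh : ℕ → ℂ → ℂ)
    (hAB : OlverSolution (Metric.ball 0 R) f μ A B)
    (hnorm : ∀ s, A (s + 1) 0 = 0)
    (hAB' : OlverSolution (Metric.ball 0 R) f μ Ah Bh) :
    ∀ s, ∀ z ∈ Metric.ball (0 : ℂ) R,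
      Ah s z = ∑ r ∈ Finset.range (s + 1), A r z * Ah (s - r) 0 ∧
      Bh s z = ∑ r ∈ Finset.range (s + 1), B r z * Ah (s - r) 0 := by
  set D := Metric.ball (0:ℂ) R with hDdef
  have hDo : IsOpen D := Metric.isOpen_ball
  have h0D : (0:ℂ) ∈ D := Metric.mem_ball_self hR
  set c : ℕ → ℂ := fun j => Ah j 0 with hcdef
  -- differentiability facts
  have dA : ∀ r, ∀ z ∈ D, DifferentiableAt ℂ (A r) z :=
    fun r z hz => (hAB.analA r z hz).differentiableAt
  have dB : ∀ r, ∀ z ∈ D, DifferentiableAt ℂ (B r) z :=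
    fun r z hz => (hAB.analB r z hz).differentiableAt
  have dAh : ∀ r, ∀ z ∈ D, DifferentiableAt ℂ (Ah r) z :=
    fun r z hz => (hAB'.analA r z hz).differentiableAt
  have dBh : ∀ r, ∀ z ∈ D, DifferentiableAt ℂ (Bh r) z :=
    fun r z hz => (hAB'.analB r z hz).differentiableAt
  have ddA : ∀ r, ∀ z ∈ D, DifferentiableAt ℂ (deriv (A r)) z :=
    fun r z hz => ((hAB.analA r).deriv z hz).differentiableAt
  have ddB : ∀ r, ∀ z ∈ D, DifferentiableAt ℂ (deriv (B r)) z :=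
    fun r z hz => ((hAB.analB r).deriv z hz).differentiableAt
  -- analyticity of the candidate sums
  have analSA : ∀ s : ℕ, AnalyticOnNhd ℂ
      (fun y => ∑ r ∈ Finset.range (s+1), A r y * c (s - r)) D :=
    fun s => Finset.analyticOnNhd_fun_sum _ (fun r _ => (hAB.analA r).mul analyticOnNhd_const)
  have analSB : ∀ s : ℕ, AnalyticOnNhd ℂ
      (fun y => ∑ r ∈ Finset.range (s+1), B r y * c (s - r)) D :=
    fun s => Finset.analyticOnNhd_fun_sum _ (fun r _ => (hAB.analB r).mul analyticOnNhd_const)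
  -- Key step B : from the A-formula at level s deduce the B-formula at level s
  have keyB : ∀ s : ℕ,
      (∀ z ∈ D, Ah s z = ∑ r ∈ Finset.range (s+1), A r z * c (s - r)) →
      ∀ z ∈ D, Bh s z = ∑ r ∈ Finset.range (s+1), B r z * c (s - r) := by
    intro s hA
    set SA : ℂ → ℂ := fun y => ∑ r ∈ Finset.range (s+1), A r y * c (s - r) with hSA
    set SB : ℂ → ℂ := fun y => ∑ r ∈ Finset.range (s+1), B r y * c (s - r) with hSB
    -- derivative of Ah s
    have hdAh : ∀ z ∈ D, deriv (Ah s) z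
        = ∑ r ∈ Finset.range (s+1), deriv (A r) z * c (s - r) := by
      intro z hz
      rw [olver_deriv_congr hDo hA hz]
      exact olver_deriv_sum_mul (fun r _ => dA r z hz)
    -- second derivative of Ah s
    have hddAh : ∀ z ∈ D, deriv (deriv (Ah s)) z
        = ∑ r ∈ Finset.range (s+1), deriv (deriv (A r)) z * c (s - r) := by
      intro z hz
      rw [olver_deriv_congr hDo hdAh hz]
      exact olver_deriv_sum_mul (fun r _ => ddA r z hz)
    -- derivative of SB
    have hdSB : ∀ z ∈ D, deriv SB z
        = ∑ r ∈ Finset.range (s+1), deriv (B r) z * c (s - r) := by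
      intro z hz
      exact olver_deriv_sum_mul (fun r _ => dB r z hz)
    -- derivatives of Bh s and SB agree off 0
    have hder : ∀ z ∈ D, z ≠ 0 → deriv (Bh s) z = deriv SB z := by
      intro z hz hz0
      have e1 : 2 * deriv (Bh s) z
          = ∑ r ∈ Finset.range (s+1),
              (-(deriv (deriv (A r)) z) + f z * A r z
                - ((2 * μ + 1) / z) * deriv (A r) z) * c (s - r) := by
        rw [hAB'.recB s z hz hz0, hddAh z hz, hA z hz, hdAh z hz]
        simp only [hSA, sub_mul, add_mul, neg_mul, Finset.mul_sum,
          Finset.sum_sub_distrib, Finset.sum_add_distrib, Finset.sum_neg_distrib,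
          mul_assoc]
      have e2 : 2 * deriv SB z
          = ∑ r ∈ Finset.range (s+1),
              (-(deriv (deriv (A r)) z) + f z * A r z
                - ((2 * μ + 1) / z) * deriv (A r) z) * c (s - r) := by
        rw [hdSB z hz, Finset.mul_sum]
        refine Finset.sum_congr rfl fun r _ => ?_
        rw [← mul_assoc, hAB.recB r z hz hz0]
      have := e1.trans e2.symm
      exact mul_left_cancel₀ two_ne_zero this
    -- the difference has vanishing derivative on all of D
    have hdiff : AnalyticOnNhd ℂ (fun y => Bh s y - SB y) D :=
      (hAB'.analB s).sub (analSB s)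
    have hderD : ∀ z ∈ D, deriv (fun y => Bh s y - SB y) z = 0 := by
      have hanal : AnalyticOnNhd ℂ (deriv (fun y => Bh s y - SB y)) D := hdiff.deriv
      have hoff : ∀ z ∈ D, z ≠ 0 → deriv (fun y => Bh s y - SB y) z = 0 := by
        intro z hz hz0
        rw [deriv_fun_sub (dBh s z hz) ((analSB s z hz).differentiableAt),
          hder z hz hz0, sub_self]
      intro z hz
      rcases eq_or_ne z 0 with rfl | hz0
      · exact olver_eq_of_punctured hR (hanal 0 h0D).continuousAt hoff
      · exact hoff z hz hz0
    have hconst : ∀ z ∈ D, (fun y => Bh s y - SB y) z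
        = (fun y => Bh s y - SB y) 0 :=
      olver_const_of_deriv_zero hR hdiff.differentiableOn hderD
    -- value at 0
    have hzero : Bh s 0 - SB 0 = 0 := by
      have h1 : 2 * Bh s 0 = 2 * SB 0 := by
        rw [hAB'.recB₀ s, hdAh 0 h0D]
        have : ∀ r ∈ Finset.range (s+1),
            deriv (A r) 0 * c (s - r) = -(2 * B r 0 * c (s - r)) := by
          intro r _
          rw [hAB.recB₀ r]; ring
        rw [Finset.sum_congr rfl this]
        simp only [hSB, Finset.mul_sum, Finset.sum_neg_distrib, neg_neg]
        exact Finset.sum_congr rfl fun r _ => by ring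
      have := mul_left_cancel₀ (two_ne_zero (α := ℂ)) h1
      rw [this, sub_self]
    intro z hz
    have := hconst z hz
    simp only at this
    rw [hzero] at this
    exact sub_eq_zero.mp this
  -- choose the antiderivatives for the normalized solution
  choose P hPa hPd hPr using hAB.recA
  -- Key step A : the A-formula holds at every level, by induction
  have keyA : ∀ s : ℕ, ∀ z ∈ D, Ah s z
      = ∑ r ∈ Finset.range (s+1), A r z * c (s - r) := by
    intro s
    induction s with
    | zero =>
      intro z hz
      simp [hAB'.A_zero, hAB.A_zero, hcdef]
    | succ s ih =>
      have hB := keyB s ih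
      set SB : ℂ → ℂ := fun y => ∑ r ∈ Finset.range (s+1), B r y * c (s - r) with hSB
      have hdBh : ∀ z ∈ D, deriv (Bh s) z
          = ∑ r ∈ Finset.range (s+1), deriv (B r) z * c (s - r) := by
        intro z hz
        rw [olver_deriv_congr hDo hB hz]
        exact olver_deriv_sum_mul (fun r _ => dB r z hz)
      obtain ⟨Ph, hPha, hPhd, hPhr⟩ := hAB'.recA s
      -- the function Q is constant on D
      set Q : ℂ → ℂ := fun y => Ph y - ∑ r ∈ Finset.range (s+1), P r y * c (s - r)
        with hQ
      have analPsum : AnalyticOnNhd ℂ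
          (fun y => ∑ r ∈ Finset.range (s+1), P r y * c (s - r)) D :=
        Finset.analyticOnNhd_fun_sum _ (fun r _ => (hPa r).mul analyticOnNhd_const)
      have hQa : AnalyticOnNhd ℂ Q D := hPha.sub analPsum
      have hQd : ∀ z ∈ D, deriv Q z = 0 := by
        intro z hz
        have h1 : deriv Q z = deriv Ph z
            - ∑ r ∈ Finset.range (s+1), deriv (P r) z * c (s - r) := by
          rw [hQ]
          rw [deriv_fun_sub (hPha z hz).differentiableAt (analPsum z hz).differentiableAt,
            olver_deriv_sum_mul (fun r _ => (hPa r z hz).differentiableAt)]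
        rw [h1, hPhd z hz, hB z hz]
        have : ∀ r ∈ Finset.range (s+1),
            deriv (P r) z * c (s - r) = f z * (B r z * c (s - r)) := by
          intro r _
          rw [hPd r z hz]; ring
        rw [Finset.sum_congr rfl this, ← Finset.mul_sum, sub_self]
      have hQc : ∀ z ∈ D, Q z = Q 0 :=
        olver_const_of_deriv_zero hR hQa.differentiableOn hQd
      -- the function g
      set g : ℂ → ℂ := fun y =>
        Ah (s+1) y - ∑ r ∈ Finset.range (s+1), A (r+1) y * c (s - r) with hg
      have analAsum : AnalyticOnNhd ℂ
          (fun y => ∑ r ∈ Finset.range (s+1), A (r+1) y * c (s - r)) D :=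
        Finset.analyticOnNhd_fun_sum _ (fun r _ => (hAB.analA (r+1)).mul analyticOnNhd_const)
      have hga : AnalyticOnNhd ℂ g D := (hAB'.analA (s+1)).sub analAsum
      have hgoff : ∀ z ∈ D, z ≠ 0 → g z = Q 0 / 2 := by
        intro z hz hz0
        have e1 : 2 * Ah (s+1) z
            = ((2 * μ + 1) / z) * Bh s z - deriv (Bh s) z + Ph z :=
          hPhr z hz hz0
        have e2 : 2 * ∑ r ∈ Finset.range (s+1), A (r+1) z * c (s - r)
            = ((2 * μ + 1) / z) * SB z - deriv (Bh s) z
              + ∑ r ∈ Finset.range (s+1), P r z * c (s - r) := by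
          rw [Finset.mul_sum, hdBh z hz, hSB]
          have e3 : ∀ r ∈ Finset.range (s+1),
              2 * (A (r+1) z * c (s - r))
                = (((2 * μ + 1) / z) * (B r z * c (s - r))
                    - deriv (B r) z * c (s - r)) + P r z * c (s - r) := by
            intro r _
            have := hPr r z hz hz0
            calc 2 * (A (r+1) z * c (s - r)) = (2 * A (r+1) z) * c (s - r) := by ring
              _ = (((2 * μ + 1) / z) * B r z - deriv (B r) z + P r z) * c (s - r) := by
                  rw [this]
              _ = _ := by ring
          rw [Finset.sum_congr rfl e3]
          simp only [Finset.sum_add_distrib, Finset.sum_sub_distrib, Finset.mul_sum]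
        have e4 : 2 * g z = Q z := by
          rw [hg, hQ]
          simp only []
          rw [mul_sub, e1, e2, hB z hz]
          ring
        rw [hQc z hz] at e4
        rw [eq_div_iff (two_ne_zero : (2:ℂ) ≠ 0)]
        linear_combination e4
      have hg0 : g 0 = Q 0 / 2 :=
        olver_eq_of_punctured hR (hga 0 h0D).differentiableAt.continuousAt hgoff
      have hg0' : g 0 = c (s+1) := by
        rw [hg]
        simp [hnorm, hcdef]
      have hgD : ∀ z ∈ D, g z = c (s+1) := by
        intro z hz
        rcases eq_or_ne z 0 with rfl | hz0
        · exact hg0'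
        · rw [hgoff z hz hz0, ← hg0, hg0']
      intro z hz
      have := hgD z hz
      rw [hg] at this
      simp only [] at this
      have hAhz : Ah (s+1) z
          = c (s+1) + ∑ r ∈ Finset.range (s+1), A (r+1) z * c (s - r) := by
        linear_combination this
      rw [hAhz]
      conv_rhs => rw [Finset.sum_range_succ']
      simp only [Nat.succ_sub_succ, Nat.sub_zero, hAB.A_zero, one_mul]
      ring
  intro s z hz
  exact ⟨keyA s z hz, keyB s (keyA s) z hz⟩
end

section
/- Let A_s(μ,z), B_s(μ,z) denote the normalized solution (A_0=1, A_s(0)=0 for s≥1) of the Olver recursion with parameter μ, and define a_0(z)=1, a_{s+1}(z) = A_{s+1}(−μ,z) + (2μ/z)B_s(−μ,z), and b_s(z) = B_s(−μ,z). Then the pair (a_s, b_s) satisfies the Olver recursion with parameter μ (with a_0 = 1). -/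
open Filter Topology

lemma deriv_of_even {g : ℂ → ℂ} {S : Set ℂ} (hS : IsOpen S)
    (hg : ∀ z ∈ S, g (-z) = g z) {z : ℂ} (hz : z ∈ S) :
    deriv g (-z) = -deriv g z := by
  have h1 : (fun x => g (-x)) =ᶠ[𝓝 z] g := by
    filter_upwards [hS.mem_nhds hz] with w hw using hg w hw
  have h2 : deriv (fun x => g (-x)) z = deriv g z := h1.deriv_eq
  rw [deriv_comp_neg] at h2
  linear_combination -h2

lemma deriv_of_odd {g : ℂ → ℂ} {S : Set ℂ} (hS : IsOpen S)
    (hg : ∀ z ∈ S, g (-z) = -g z) {z : ℂ} (hz : z ∈ S) :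
    deriv g (-z) = deriv g z := by
  have h1 : (fun x => g (-x)) =ᶠ[𝓝 z] (fun x => -g x) := by
    filter_upwards [hS.mem_nhds hz] with w hw using hg w hw
  have h2 : deriv (fun x => g (-x)) z = deriv (fun x => -g x) z := h1.deriv_eq
  rw [deriv_comp_neg, deriv.fun_neg] at h2
  linear_combination -h2

lemma const_of_hasDerivAt_zero {S : Set ℂ} (hS : Convex ℝ S) (hSo : IsOpen S)
    {g : ℂ → ℂ} (hg : ∀ z ∈ S, HasDerivAt g 0 z) {x y : ℂ} (hx : x ∈ S) (hy : y ∈ S) :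
    g x = g y := by
  apply hS.is_const_of_fderivWithin_eq_zero
    (fun z hz => ((hg z hz).differentiableAt).differentiableWithinAt) _ hx hy
  intro z hz
  rw [fderivWithin_of_isOpen hSo hz]
  have := (hg z hz).hasFDerivAt
  rw [this.fderiv]; ext; simp



/-- Theorem 5.2 (first part) of the paper: if `A_s(-μ,·), B_s(-μ,·)` is the
normalized Olver solution with parameter `-μ`, then
`a_0 = 1`, `a_{s+1}(z) = A_{s+1}(-μ,z) + (2μ/z) B_s(-μ,z)` (with the value at
`z = 0` given by analytic continuation, `a_{s+1}(0) = A_{s+1}(-μ,0) + 2μ B_s'(-μ,0)`)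
and `b_s(z) = B_s(-μ,z)` satisfy the Olver recursion with parameter `μ`. -/
theorem olver_parameter_flip (R : ℝ) (hR : 0 < R) (f : ℂ → ℂ) (μ : ℂ)
    (hf : AnalyticOnNhd ℂ f (Metric.ball 0 R))
    (hfe : ∀ z ∈ Metric.ball (0 : ℂ) R, f (-z) = f z)
    (Am Bm : ℕ → ℂ → ℂ)
    (hAB : OlverSolution (Metric.ball 0 R) f (-μ) Am Bm)
    (hnorm : ∀ s, Am (s + 1) 0 = 0)
    (a b : ℕ → ℂ → ℂ)
    (ha0 : ∀ z, a 0 z = 1)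
    (ha : ∀ s, ∀ z : ℂ, z ≠ 0 → a (s + 1) z = Am (s + 1) z + (2 * μ / z) * Bm s z)
    (haz : ∀ s, a (s + 1) 0 = Am (s + 1) 0 + 2 * μ * deriv (Bm s) 0)
    (hb : ∀ s z, b s z = Bm s z) :
    OlverSolution (Metric.ball 0 R) f μ a b := by
  set D := Metric.ball (0 : ℂ) R with hDdef
  have hDo : IsOpen D := Metric.isOpen_ball
  have hDc : Convex ℝ D := convex_ball 0 R
  have h0D : (0 : ℂ) ∈ D := Metric.mem_ball_self hR
  have hsym : ∀ z ∈ D, -z ∈ D := by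
    intro z hz
    simpa [hDdef, Metric.mem_ball] using hz
  have hdA : ∀ s, ∀ z ∈ D, HasDerivAt (Am s) (deriv (Am s) z) z :=
    fun s z hz => ((hAB.analA s z hz).differentiableAt).hasDerivAt
  have hdB : ∀ s, ∀ z ∈ D, HasDerivAt (Bm s) (deriv (Bm s) z) z :=
    fun s z hz => ((hAB.analB s z hz).differentiableAt).hasDerivAt
  -- auxiliary: from `Am s` even deduce `Bm s` odd
  have oddB : ∀ s, (∀ z ∈ D, Am s (-z) = Am s z) → (∀ z ∈ D, Bm s (-z) = -Bm s z) := by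
    intro s hAe
    have hA'odd : ∀ z ∈ D, deriv (Am s) (-z) = -deriv (Am s) z :=
      fun z hz => deriv_of_even hDo hAe hz
    have hA''even : ∀ z ∈ D, deriv (deriv (Am s)) (-z) = deriv (deriv (Am s)) z :=
      fun z hz => deriv_of_odd hDo hA'odd hz
    have hA'0 : deriv (Am s) 0 = 0 := by
      have h := hA'odd 0 h0D
      rw [neg_zero] at h
      linear_combination h / 2
    have hB'even : ∀ z ∈ D, deriv (Bm s) (-z) = deriv (Bm s) z := by
      intro z hz
      rcases eq_or_ne z 0 with rfl | hzne
      · rw [neg_zero]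
      · have h1 := hAB.recB s z hz hzne
        have h2 := hAB.recB s (-z) (hsym z hz) (neg_ne_zero.mpr hzne)
        rw [hA''even z hz, hfe z hz, hAe z hz, hA'odd z hz] at h2
        apply mul_left_cancel₀ (two_ne_zero (α := ℂ))
        rw [h1, h2]
        field_simp
    have hodd : ∀ z ∈ D, HasDerivAt (fun w => Bm s w + Bm s (-w)) 0 z := by
      intro z hz
      have h1 := hdB s z hz
      have h2 : HasDerivAt (fun w => Bm s (-w)) (-deriv (Bm s) (-z)) z := by
        simpa [Function.comp_def] using (hdB s (-z) (hsym z hz)).comp z (hasDerivAt_neg z)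
      have h3 := h1.fun_add h2
      refine h3.congr_deriv ?_
      rw [hB'even z hz]; ring
    have hB0 : Bm s 0 = 0 := by
      have h := hAB.recB₀ s
      rw [hA'0] at h
      linear_combination h / 2
    intro z hz
    have hconst := const_of_hasDerivAt_zero hDc hDo hodd hz h0D
    rw [neg_zero, hB0] at hconst
    linear_combination hconst
  -- auxiliary: evenness propagates
  have evenAnext : ∀ s, (∀ z ∈ D, Am s (-z) = Am s z) → (∀ z ∈ D, Bm s (-z) = -Bm s z) →
      (∀ z ∈ D, Am (s + 1) (-z) = Am (s + 1) z) := by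
    intro s hAe hBo
    obtain ⟨P, hPa, hP', hPrec⟩ := hAB.recA s
    have hB'even : ∀ z ∈ D, deriv (Bm s) (-z) = deriv (Bm s) z :=
      fun z hz => deriv_of_odd hDo hBo hz
    have hPeven : ∀ z ∈ D, P (-z) = P z := by
      have hq : ∀ z ∈ D, HasDerivAt (fun w => P w - P (-w)) 0 z := by
        intro z hz
        have h1 : HasDerivAt P (deriv P z) z := (hPa z hz).differentiableAt.hasDerivAt
        have h2 : HasDerivAt (fun w => P (-w)) (-deriv P (-z)) z := by
          simpa [Function.comp_def] using ((hPa (-z) (hsym z hz)).differentiableAt.hasDerivAt).comp z (hasDerivAt_neg z)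
        have h3 := h1.fun_sub h2
        refine h3.congr_deriv ?_
        rw [hP' z hz, hP' (-z) (hsym z hz), hfe z hz, hBo z hz]; ring
      intro z hz
      have h := const_of_hasDerivAt_zero hDc hDo hq hz h0D
      rw [neg_zero, sub_self] at h
      linear_combination -h
    intro z hz
    rcases eq_or_ne z 0 with rfl | hzne
    · rw [neg_zero]
    · have h1 := hPrec z hz hzne
      have h2 := hPrec (-z) (hsym z hz) (neg_ne_zero.mpr hzne)
      rw [hBo z hz, hB'even z hz, hPeven z hz] at h2
      apply mul_left_cancel₀ (two_ne_zero (α := ℂ))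
      rw [h1, h2]
      field_simp
  have evenA : ∀ s, ∀ z ∈ D, Am s (-z) = Am s z := by
    intro s
    induction s with
    | zero => intro z hz; rw [hAB.A_zero, hAB.A_zero]
    | succ n ih => exact evenAnext n ih (oddB n ih)
  have oddBm : ∀ s, ∀ z ∈ D, Bm s (-z) = -Bm s z := fun s => oddB s (evenA s)
  have B0 : ∀ s, Bm s 0 = 0 := by
    intro s
    have h := oddBm s 0 h0D
    rw [neg_zero] at h
    linear_combination h / 2
  -- the dslope function
  have hg_ne : ∀ s, ∀ z : ℂ, z ≠ 0 → dslope (Bm s) 0 z = Bm s z / z := by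
    intro s z hz
    rw [dslope_of_ne _ hz, slope_def_field, B0 s]
    simp
  have hga : ∀ s, AnalyticOnNhd ℂ (dslope (Bm s) 0) D := by
    intro s z hz
    rcases eq_or_ne z 0 with rfl | hzne
    · obtain ⟨p, hp⟩ := hAB.analB s 0 h0D
      exact (hp.has_fpower_series_dslope_fslope).analyticAt
    · have h1 : AnalyticAt ℂ (fun w => Bm s w / w) z :=
        (hAB.analB s z hz).div analyticAt_id hzne
      apply h1.congr
      filter_upwards [isOpen_compl_singleton.mem_nhds hzne] with w hw
      exact (hg_ne s w hw).symm
  have a_eq : ∀ s, a (s + 1) = fun z => Am (s + 1) z + 2 * μ * dslope (Bm s) 0 z := by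
    intro s
    funext z
    rcases eq_or_ne z 0 with rfl | hz
    · rw [haz s, dslope_same]
    · rw [ha s z hz, hg_ne s z hz]; ring
  have even_a : ∀ s, ∀ z ∈ D, a (s + 1) (-z) = a (s + 1) z := by
    intro s z hz
    rcases eq_or_ne z 0 with rfl | hzne
    · rw [neg_zero]
    · rw [ha s z hzne, ha s (-z) (neg_ne_zero.mpr hzne), evenA (s + 1) z hz, oddBm s z hz]
      field_simp
  have hbf : ∀ t, b t = Bm t := fun t => funext (hb t)
  constructor
  · -- analA
    intro s
    cases s with
    | zero =>
      have h : a 0 = fun _ => (1 : ℂ) := funext ha0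
      rw [h]
      exact fun z _ => analyticAt_const
    | succ n =>
      rw [a_eq n]
      exact fun z hz => (hAB.analA (n + 1) z hz).add (analyticAt_const.mul (hga n z hz))
  · -- analB
    intro s; rw [hbf s]; exact hAB.analB s
  · exact ha0
  · -- recB
    intro s z₀ hz₀ hz₀ne
    rw [hbf s]
    cases s with
    | zero =>
      have ha0f : a 0 = fun _ => (1 : ℂ) := funext ha0
      have hA0f : Am 0 = fun _ => (1 : ℂ) := funext hAB.A_zero
      have h1 := hAB.recB 0 z₀ hz₀ hz₀ne
      rw [hA0f] at h1
      simp only [deriv_const'] at h1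
      rw [ha0f]
      simp only [deriv_const']
      simpa using h1
    | succ n =>
      set V : Set ℂ := D ∩ {(0 : ℂ)}ᶜ with hVdef
      have hVo : IsOpen V := hDo.inter isOpen_compl_singleton
      have hz₀V : z₀ ∈ V := ⟨hz₀, hz₀ne⟩
      set G1 : ℂ → ℂ :=
        fun z => deriv (Am (n + 1)) z + 2 * μ * ((deriv (Bm n) z * z - Bm n z * 1) / z ^ 2)
        with hG1
      have hGd : ∀ z ∈ V, HasDerivAt (a (n + 1)) (G1 z) z := by
        rintro z ⟨hzD, hzne⟩
        have hzne' : z ≠ 0 := hzne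
        have hdiv : HasDerivAt (fun w => Bm n w / w)
            ((deriv (Bm n) z * z - Bm n z * 1) / z ^ 2) z :=
          (hdB n z hzD).div (hasDerivAt_id z) hzne'
        have hsum := (hdA (n + 1) z hzD).add (hdiv.const_mul (2 * μ))
        have h5 : HasDerivAt (fun w => Am (n + 1) w + 2 * μ * (Bm n w / w)) (G1 z) z := hsum
        apply h5.congr_of_eventuallyEq
        filter_upwards [isOpen_compl_singleton.mem_nhds hzne'] with w hw
        rw [ha n w hw]; ring
      have hda_eq : Set.EqOn (deriv (a (n + 1))) G1 V := fun z hz => (hGd z hz).deriv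
      have hda_ev : deriv (a (n + 1)) =ᶠ[𝓝 z₀] G1 := by
        filter_upwards [hVo.mem_nhds hz₀V] with w hw using hda_eq hw
      have h2nd : deriv (deriv (a (n + 1))) z₀ = deriv G1 z₀ := hda_ev.deriv_eq
      have hA'' : HasDerivAt (deriv (Am (n + 1))) (deriv (deriv (Am (n + 1))) z₀) z₀ :=
        (((hAB.analA (n + 1)).deriv) z₀ hz₀).differentiableAt.hasDerivAt
      have hB'' : HasDerivAt (deriv (Bm n)) (deriv (deriv (Bm n)) z₀) z₀ :=
        (((hAB.analB n).deriv) z₀ hz₀).differentiableAt.hasDerivAt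
      have hBd : HasDerivAt (Bm n) (deriv (Bm n) z₀) z₀ := hdB n z₀ hz₀
      have hnum : HasDerivAt (fun z => deriv (Bm n) z * z - Bm n z * 1)
          (deriv (deriv (Bm n)) z₀ * z₀ + deriv (Bm n) z₀ * 1 - deriv (Bm n) z₀ * 1) z₀ := by
        have := (hB''.fun_mul (hasDerivAt_id' z₀)).fun_sub hBd
        simpa using this
      have hden : HasDerivAt (fun z : ℂ => z ^ 2) ((2 : ℕ) * z₀ ^ 1) z₀ := hasDerivAt_pow 2 z₀
      have hz2 : z₀ ^ 2 ≠ 0 := pow_ne_zero _ hz₀ne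
      have hfrac := hnum.div hden hz2
      have hG1d : HasDerivAt G1
          (deriv (deriv (Am (n + 1))) z₀ + 2 * μ *
            (((deriv (deriv (Bm n)) z₀ * z₀ + deriv (Bm n) z₀ * 1 - deriv (Bm n) z₀ * 1) * z₀ ^ 2
              - (deriv (Bm n) z₀ * z₀ - Bm n z₀ * 1) * ((2 : ℕ) * z₀ ^ 1)) / (z₀ ^ 2) ^ 2)) z₀ :=
        hA''.add (hfrac.const_mul (2 * μ))
      have F1 := hAB.recB (n + 1) z₀ hz₀ hz₀ne
      obtain ⟨P, hPa, hP', hPrec⟩ := hAB.recA n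
      have hLd : HasDerivAt (fun z => 2 * Am (n + 1) z) (2 * deriv (Am (n + 1)) z₀) z₀ :=
        (hdA (n + 1) z₀ hz₀).const_mul 2
      have hinv : HasDerivAt (fun z : ℂ => (2 * (-μ) + 1) * z⁻¹)
          ((2 * (-μ) + 1) * (-(z₀ ^ 2)⁻¹)) z₀ := (hasDerivAt_inv hz₀ne).const_mul _
      have hterm1 : HasDerivAt (fun z => ((2 * (-μ) + 1) / z) * Bm n z)
          ((2 * (-μ) + 1) * (-(z₀ ^ 2)⁻¹) * Bm n z₀ + ((2 * (-μ) + 1) * z₀⁻¹) * deriv (Bm n) z₀)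
          z₀ := by
        have := hinv.fun_mul hBd
        simpa [div_eq_mul_inv] using this
      have hPd : HasDerivAt P (f z₀ * Bm n z₀) z₀ := by
        have h := (hPa z₀ hz₀).differentiableAt.hasDerivAt
        rwa [hP' z₀ hz₀] at h
      have hRd := (hterm1.fun_sub hB'').fun_add hPd
      have hev : (fun z => 2 * Am (n + 1) z) =ᶠ[𝓝 z₀]
          (fun z => ((2 * (-μ) + 1) / z) * Bm n z - deriv (Bm n) z + P z) := by
        filter_upwards [hVo.mem_nhds hz₀V] with w hw using hPrec w hw.1 hw.2
      have F2 : 2 * deriv (Am (n + 1)) z₀ =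
          (2 * (-μ) + 1) * (-(z₀ ^ 2)⁻¹) * Bm n z₀ + ((2 * (-μ) + 1) * z₀⁻¹) * deriv (Bm n) z₀
            - deriv (deriv (Bm n)) z₀ + f z₀ * Bm n z₀ := by
        have e := hev.deriv_eq
        rw [hLd.deriv, hRd.deriv] at e
        exact e
      rw [h2nd, hG1d.deriv, ha n z₀ hz₀ne, hda_eq hz₀V, hG1]
      push_cast
      beta_reduce
      field_simp at F1 F2 ⊢
      linear_combination z₀ ^ 2 * F1 + 2 * μ * F2
  · -- recB₀
    intro s
    cases s with
    | zero =>
      have ha0f : a 0 = fun _ => (1 : ℂ) := funext ha0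
      rw [hbf 0, ha0f, B0 0]
      simp
    | succ n =>
      have hda := deriv_of_even hDo (even_a n) h0D
      rw [neg_zero] at hda
      have h0 : deriv (a (n + 1)) 0 = 0 := by linear_combination hda / 2
      rw [hbf (n + 1), B0 (n + 1), h0]
      ring
  · -- recA
    intro s
    obtain ⟨P, hPa, hP', hPrec⟩ := hAB.recA s
    refine ⟨P, hPa, fun z hz => by rw [hP' z hz, hb], fun z hz hzne => ?_⟩
    have h1 := hPrec z hz hzne
    rw [ha s z hzne, hbf s]
    linear_combination h1
end

section
/- With A_s(μ,z), B_s(μ,z) the normalized Olver recursion solutions and a_s, b_s defined by a_{s+1}(z)=A_{s+1}(−μ,z)+(2μ/z)B_s(−μ,z), b_s(z)=B_s(−μ,z), one has for all s ≥ 0: a_s(z) = A_s(μ,z) + 2μ Σ_{r=0}^{s−1} A_r(μ,z) B'_{s−1−r}(−μ,0) and b_s(z) = B_s(μ,z) + 2μ Σ_{r=0}^{s−1} B_r(μ,z) B'_{s−1−r}(−μ,0). -/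
open Metric Set Filter Topology


namespace OlverAux

variable {R : ℝ}

lemma ball_symm {z : ℂ} (hz : z ∈ ball (0:ℂ) R) : -z ∈ ball (0:ℂ) R := by
  simpa [mem_ball, dist_eq_norm] using hz

lemma zero_mem (hR : 0 < R) : (0:ℂ) ∈ ball (0:ℂ) R := by simpa [mem_ball] using hR

lemma puncOpen : IsOpen (ball (0:ℂ) R \ {0}) :=
  isOpen_ball.sdiff isClosed_singleton

lemma eqOn_extend (hR : 0 < R) {g h : ℂ → ℂ}
    (hg : AnalyticOnNhd ℂ g (ball 0 R)) (hh : AnalyticOnNhd ℂ h (ball 0 R))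
    (he : ∀ z ∈ ball (0:ℂ) R, z ≠ 0 → g z = h z) : EqOn g h (ball 0 R) := by
  have hz₀mem : (R/2 : ℂ) ∈ ball (0:ℂ) R \ {0} := by
    constructor
    · simp only [mem_ball, dist_zero_right]
      have : ‖((R:ℂ)/2)‖ = R/2 := by
        rw [norm_div]
        simp [Complex.norm_real, abs_of_pos hR]
      rw [this]
      linarith
    · simp only [mem_singleton_iff]
      intro h
      have : (R/2 : ℝ) = 0 := by exact_mod_cast h
      linarith
  refine hg.eqOn_of_preconnected_of_eventuallyEq hh
    ((convex_ball (0:ℂ) R).isPreconnected) hz₀mem.1 ?_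
  refine Filter.eventuallyEq_of_mem (puncOpen.mem_nhds hz₀mem) ?_
  intro z hz
  exact he z hz.1 hz.2

lemma derivEqOn {U : Set ℂ} (hU : IsOpen U) {g h : ℂ → ℂ} (he : EqOn g h U)
    {z : ℂ} (hz : z ∈ U) : deriv g z = deriv h z :=
  (he.eventuallyEq_of_mem (hU.mem_nhds hz)).deriv_eq

lemma const_extend (hR : 0 < R) {g : ℂ → ℂ}
    (hg : AnalyticOnNhd ℂ g (ball 0 R))
    (hg' : ∀ z ∈ ball (0:ℂ) R, z ≠ 0 → deriv g z = 0) :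
    ∀ z ∈ ball (0:ℂ) R, g z = g 0 := by
  have hd0 : ∀ z ∈ ball (0:ℂ) R, deriv g z = 0 := by
    have := eqOn_extend hR (hg.deriv) (analyticOnNhd_const (v := (0:ℂ))) hg'
    intro z hz; exact this hz
  intro z hz
  refine (convex_ball (0:ℂ) R).is_const_of_fderivWithin_eq_zero
    (hg.differentiableOn) ?_ hz (zero_mem hR)
  intro x hx
  rw [fderivWithin_of_isOpen isOpen_ball hx]
  have : HasDerivAt g 0 x := by
    have h1 := ((hg x hx).differentiableAt).hasDerivAt
    rwa [hd0 x hx] at h1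
  have h2 := this.hasFDerivAt
  have h3 : HasFDerivAt g (0 : ℂ →L[ℂ] ℂ) x := by
    have heq : (ContinuousLinearMap.smulRight (1 : ℂ →L[ℂ] ℂ) (0:ℂ)) = 0 := by
      ext; simp
    rwa [ContinuousLinearMap.toSpanSingleton_zero] at h2
  exact h3.fderiv

lemma tendsto_div_self {B : ℂ → ℂ} (hB : AnalyticAt ℂ B 0) (h0 : B 0 = 0) :
    Tendsto (fun z => B z / z) (𝓝[≠] (0:ℂ)) (𝓝 (deriv B 0)) := by
  have h1 : HasDerivAt B (deriv B 0) 0 := hB.differentiableAt.hasDerivAt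
  rw [hasDerivAt_iff_tendsto_slope] at h1
  refine h1.congr' ?_
  filter_upwards [self_mem_nhdsWithin] with z hz
  simp [slope_def_field, h0]

lemma sum3 {n : ℕ} {u v w x c : ℕ → ℂ}
    (h : ∀ r ∈ Finset.range n, 2 * u r = v r + w r + x r) :
    2 * ∑ r ∈ Finset.range n, u r * c r =
      (∑ r ∈ Finset.range n, v r * c r) + (∑ r ∈ Finset.range n, w r * c r)
        + (∑ r ∈ Finset.range n, x r * c r) := by
  rw [Finset.mul_sum, ← Finset.sum_add_distrib, ← Finset.sum_add_distrib]
  exact Finset.sum_congr rfl fun r hr => by linear_combination c r * h r hr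

lemma neg_comp_analytic {g : ℂ → ℂ} (hg : AnalyticOnNhd ℂ g (ball 0 R)) :
    AnalyticOnNhd ℂ (fun z => g (-z)) (ball 0 R) := by
  have h1 : AnalyticOnNhd ℂ (fun z : ℂ => -z) (ball 0 R) :=
    (analyticOnNhd_id (𝕜 := ℂ)).neg
  exact hg.comp h1 (fun z hz => ball_symm hz)

lemma deriv_odd_of_even {g : ℂ → ℂ} (hg : ∀ z ∈ ball (0:ℂ) R, g (-z) = g z)
    {z : ℂ} (hz : z ∈ ball (0:ℂ) R) : deriv g (-z) = -(deriv g z) := by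
  have h1 : EqOn (fun w => g (-w)) g (ball 0 R) := fun w hw => hg w hw
  have h2 := derivEqOn isOpen_ball h1 hz
  rw [deriv_comp_neg] at h2
  linear_combination -h2

lemma deriv_even_of_odd {g : ℂ → ℂ} (hg : ∀ z ∈ ball (0:ℂ) R, g (-z) = -(g z))
    {z : ℂ} (hz : z ∈ ball (0:ℂ) R) : deriv g (-z) = deriv g z := by
  have h1 : EqOn (fun w => g (-w)) (fun w => -(g w)) (ball 0 R) := fun w hw => hg w hw
  have h2 := derivEqOn isOpen_ball h1 hz
  rw [deriv_comp_neg, deriv.fun_neg] at h2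
  linear_combination -h2

/-- If `A s` is even then `B s` is odd. -/
lemma B_odd_of_A_even (hR : 0 < R) {f : ℂ → ℂ} {μ : ℂ} {A B : ℕ → ℂ → ℂ}
    (hfe : ∀ z ∈ ball (0:ℂ) R, f (-z) = f z)
    (hS : OlverSolution (ball 0 R) f μ A B) (s : ℕ)
    (hAe : ∀ z ∈ ball (0:ℂ) R, A s (-z) = A s z) :
    ∀ z ∈ ball (0:ℂ) R, B s (-z) = -(B s z) := by
  have hA'odd : ∀ z ∈ ball (0:ℂ) R, deriv (A s) (-z) = -(deriv (A s) z) :=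
    fun z hz => deriv_odd_of_even hAe hz
  have hA''even : ∀ z ∈ ball (0:ℂ) R, deriv (deriv (A s)) (-z) = deriv (deriv (A s)) z :=
    fun z hz => deriv_even_of_odd hA'odd hz
  have hA'0 : deriv (A s) 0 = 0 := by
    have := hA'odd 0 (zero_mem hR)
    rw [neg_zero] at this
    linear_combination this / 2
  -- q z = B s z + B s (-z) is constant 0
  have hq : ∀ z ∈ ball (0:ℂ) R, (fun w => B s w + B s (-w)) z = (fun w => B s w + B s (-w)) 0 := by
    refine const_extend hR ((hS.analB s).add (neg_comp_analytic (hS.analB s))) ?_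
    intro z hz hne
    have hd1 : DifferentiableAt ℂ (B s) z := ((hS.analB s) z hz).differentiableAt
    have hd2 : DifferentiableAt ℂ (fun w => B s (-w)) z :=
      ((neg_comp_analytic (hS.analB s)) z hz).differentiableAt
    rw [deriv_fun_add hd1 hd2, deriv_comp_neg]
    have hB1 := hS.recB s z hz hne
    have hB2 := hS.recB s (-z) (ball_symm hz) (neg_ne_zero.mpr hne)
    rw [hfe z hz, hAe z hz, hA'odd z hz, hA''even z hz, div_neg] at hB2
    linear_combination (hB1 - hB2) / 2
  intro z hz
  have h0 := hq z hz
  simp only [neg_zero] at h0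
  have hB0 : 2 * B s 0 = -(deriv (A s) 0) := hS.recB₀ s
  rw [hA'0] at hB0
  have : B s 0 = 0 := by linear_combination hB0 / 2
  rw [this] at h0
  linear_combination h0

/-- Parity: each `A s` is even and each `B s` is odd. -/
lemma parity (hR : 0 < R) {f : ℂ → ℂ} {μ : ℂ} {A B : ℕ → ℂ → ℂ}
    (hfe : ∀ z ∈ ball (0:ℂ) R, f (-z) = f z)
    (hS : OlverSolution (ball 0 R) f μ A B) :
    ∀ s, (∀ z ∈ ball (0:ℂ) R, A s (-z) = A s z) ∧
      (∀ z ∈ ball (0:ℂ) R, B s (-z) = -(B s z)) := by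
  intro s
  induction s with
  | zero =>
    have hAe : ∀ z ∈ ball (0:ℂ) R, A 0 (-z) = A 0 z := by
      intro z _; rw [hS.A_zero, hS.A_zero]
    exact ⟨hAe, B_odd_of_A_even hR hfe hS 0 hAe⟩
  | succ s ih =>
    obtain ⟨hAe, hBo⟩ := ih
    obtain ⟨P, hPa, hPd, hPrec⟩ := hS.recA s
    -- P is even
    have hPe : ∀ z ∈ ball (0:ℂ) R, P (-z) = P z := by
      have hq : ∀ z ∈ ball (0:ℂ) R,
          (fun w => P w - P (-w)) z = (fun w => P w - P (-w)) 0 := by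
        refine const_extend hR (hPa.sub (neg_comp_analytic hPa)) ?_
        intro z hz hne
        have hd1 : DifferentiableAt ℂ P z := (hPa z hz).differentiableAt
        have hd2 : DifferentiableAt ℂ (fun w => P (-w)) z :=
          ((neg_comp_analytic hPa) z hz).differentiableAt
        rw [deriv_fun_sub hd1 hd2, deriv_comp_neg]
        rw [hPd z hz, hPd (-z) (ball_symm hz), hfe z hz, hBo z hz]
        ring
      intro z hz
      have h0 := hq z hz
      simp only [neg_zero, sub_self] at h0
      linear_combination -h0
    have hB'even : ∀ z ∈ ball (0:ℂ) R, deriv (B s) (-z) = deriv (B s) z :=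
      fun z hz => deriv_even_of_odd hBo hz
    -- A (s+1) is even
    have hAe' : ∀ z ∈ ball (0:ℂ) R, A (s+1) (-z) = A (s+1) z := by
      have := eqOn_extend hR (neg_comp_analytic (hS.analA (s+1))) (hS.analA (s+1)) ?_
      · intro z hz; exact this hz
      intro z hz hne
      have h1 := hPrec z hz hne
      have h2 := hPrec (-z) (ball_symm hz) (neg_ne_zero.mpr hne)
      rw [hBo z hz, hB'even z hz, hPe z hz, div_neg] at h2
      linear_combination (h2 - h1) / 2
    exact ⟨hAe', B_odd_of_A_even hR hfe hS (s+1) hAe'⟩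

lemma B_zero (hR : 0 < R) {f : ℂ → ℂ} {μ : ℂ} {A B : ℕ → ℂ → ℂ}
    (hfe : ∀ z ∈ ball (0:ℂ) R, f (-z) = f z)
    (hS : OlverSolution (ball 0 R) f μ A B) (s : ℕ) : B s 0 = 0 := by
  have h := (parity hR hfe hS s).2 0 (zero_mem hR)
  rw [neg_zero] at h
  linear_combination h / 2

lemma derivA_zero (hR : 0 < R) {f : ℂ → ℂ} {μ : ℂ} {A B : ℕ → ℂ → ℂ}
    (hfe : ∀ z ∈ ball (0:ℂ) R, f (-z) = f z)
    (hS : OlverSolution (ball 0 R) f μ A B) (s : ℕ) : deriv (A s) 0 = 0 := by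
  have h := deriv_odd_of_even (parity hR hfe hS s).1 (zero_mem hR)
  rw [neg_zero] at h
  linear_combination h / 2


/-- The combination `g k + 2μ ∑_{r<k} g r · c (k-1-r)`. -/
noncomputable def comb (μ : ℂ) (c : ℕ → ℂ) (g : ℕ → ℂ → ℂ) (k : ℕ) : ℂ → ℂ :=
  fun z => g k z + 2*μ*∑ r ∈ Finset.range k, g r z * c (k-1-r)

lemma comb_anal {μ : ℂ} {c : ℕ → ℂ} {g : ℕ → ℂ → ℂ}
    (hg : ∀ r, AnalyticOnNhd ℂ (g r) (ball 0 R)) (k : ℕ) :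
    AnalyticOnNhd ℂ (comb μ c g k) (ball 0 R) := by
  unfold comb
  exact (hg k).add ((analyticOnNhd_const).mul
    (Finset.analyticOnNhd_fun_sum _ (fun r _ => (hg r).mul analyticOnNhd_const)))

lemma comb_deriv {μ : ℂ} {c : ℕ → ℂ} {g : ℕ → ℂ → ℂ}
    (hg : ∀ r, AnalyticOnNhd ℂ (g r) (ball 0 R)) (k : ℕ) {z : ℂ}
    (hz : z ∈ ball (0:ℂ) R) :
    deriv (comb μ c g k) z = comb μ c (fun r => deriv (g r)) k z := by
  have hd : ∀ r : ℕ, DifferentiableAt ℂ (g r) z := fun r => ((hg r) z hz).differentiableAt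
  have hds : ∀ i ∈ Finset.range k, DifferentiableAt ℂ (fun w => g i w * c (k-1-i)) z :=
    fun i _ => (hd i).mul_const _
  unfold comb
  rw [deriv_fun_add (hd k) ((DifferentiableAt.fun_sum hds).const_mul _),
    deriv_const_mul _ (DifferentiableAt.fun_sum hds), deriv_fun_sum hds]
  refine congrArg _ (congrArg _ (Finset.sum_congr rfl fun i _ => ?_))
  exact deriv_mul_const (hd i) _

lemma comb_deriv2 {μ : ℂ} {c : ℕ → ℂ} {g : ℕ → ℂ → ℂ}
    (hg : ∀ r, AnalyticOnNhd ℂ (g r) (ball 0 R)) (k : ℕ) {z : ℂ}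
    (hz : z ∈ ball (0:ℂ) R) :
    deriv (deriv (comb μ c g k)) z = comb μ c (fun r => deriv (deriv (g r))) k z := by
  have h1 : EqOn (deriv (comb μ c g k)) (comb μ c (fun r => deriv (g r)) k) (ball 0 R) :=
    fun w hw => comb_deriv hg k hw
  rw [derivEqOn isOpen_ball h1 hz]
  exact comb_deriv (fun r => (hg r).deriv) k hz

lemma sum3B {n : ℕ} {u v w x c : ℕ → ℂ} {q fz : ℂ}
    (h : ∀ r ∈ Finset.range n, 2 * u r = -(v r) + fz * w r - q * x r) :
    2 * ∑ r ∈ Finset.range n, u r * c r =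
      -(∑ r ∈ Finset.range n, v r * c r) + fz * (∑ r ∈ Finset.range n, w r * c r)
        - q * (∑ r ∈ Finset.range n, x r * c r) := by
  have h2 : ∀ r ∈ Finset.range n,
      (2:ℂ) * (u r * c r) = -(v r * c r) + fz * (w r * c r) - q * (x r * c r) :=
    fun r hr => by linear_combination c r * h r hr
  calc 2 * ∑ r ∈ Finset.range n, u r * c r
      = ∑ r ∈ Finset.range n, 2 * (u r * c r) := Finset.mul_sum _ _ _
    _ = ∑ r ∈ Finset.range n, (-(v r * c r) + fz * (w r * c r) - q * (x r * c r)) :=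
        Finset.sum_congr rfl h2
    _ = _ := by
        rw [Finset.sum_sub_distrib, Finset.sum_add_distrib, Finset.sum_neg_distrib,
          ← Finset.mul_sum, ← Finset.mul_sum]

lemma sum3A {n : ℕ} {u v w x c : ℕ → ℂ} {q : ℂ}
    (h : ∀ r ∈ Finset.range n, 2 * u r = q * v r - w r + x r) :
    2 * ∑ r ∈ Finset.range n, u r * c r =
      q * (∑ r ∈ Finset.range n, v r * c r) - (∑ r ∈ Finset.range n, w r * c r)
        + (∑ r ∈ Finset.range n, x r * c r) := by
  have h2 : ∀ r ∈ Finset.range n,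
      (2:ℂ) * (u r * c r) = q * (v r * c r) - (w r * c r) + (x r * c r) :=
    fun r hr => by linear_combination c r * h r hr
  calc 2 * ∑ r ∈ Finset.range n, u r * c r
      = ∑ r ∈ Finset.range n, 2 * (u r * c r) := Finset.mul_sum _ _ _
    _ = ∑ r ∈ Finset.range n, (q * (v r * c r) - (w r * c r) + (x r * c r)) :=
        Finset.sum_congr rfl h2
    _ = _ := by
        rw [Finset.sum_add_distrib, Finset.sum_sub_distrib, ← Finset.mul_sum]

/-- the `comb` of `B`-derivatives satisfies the same `recB`-type identity. -/
lemma comb_recB {f : ℂ → ℂ} {μ ν : ℂ} {A B : ℕ → ℂ → ℂ}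
    (hS : OlverSolution (ball 0 R) f ν A B) (c : ℕ → ℂ) (k : ℕ) {z : ℂ}
    (hz : z ∈ ball (0:ℂ) R) (hne : z ≠ 0) :
    2 * comb μ c (fun r => deriv (B r)) k z =
      -(comb μ c (fun r => deriv (deriv (A r))) k z) + f z * comb μ c A k z
        - ((2*ν+1)/z) * comb μ c (fun r => deriv (A r)) k z := by
  have hs := sum3B (n := k) (c := fun r => c (k-1-r))
    (u := fun r => deriv (B r) z) (v := fun r => deriv (deriv (A r)) z)
    (w := fun r => A r z) (x := fun r => deriv (A r) z)
    (q := (2*ν+1)/z) (fz := f z)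
    (fun r _ => by linear_combination hS.recB r z hz hne)
  unfold comb
  linear_combination hS.recB k z hz hne + 2*μ*hs

/-- the `comb` of `A` at level `k+1` satisfies a `recA`-type identity. -/
lemma comb_recA {μ ν : ℂ} {A B : ℕ → ℂ → ℂ} {Pc : ℕ → ℂ → ℂ} {c : ℕ → ℂ}
    (hA0 : ∀ z, A 0 z = 1)
    (hrec : ∀ r, ∀ z ∈ ball (0:ℂ) R, z ≠ 0 →
      2 * A (r+1) z = ((2*ν+1)/z) * B r z - deriv (B r) z + Pc r z)
    (k : ℕ) {z : ℂ} (hz : z ∈ ball (0:ℂ) R) (hne : z ≠ 0) :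
    2 * comb μ c A (k+1) z =
      ((2*ν+1)/z) * comb μ c B k z - comb μ c (fun r => deriv (B r)) k z
        + comb μ c Pc k z + 4*μ*c k := by
  have hs := sum3A (n := k) (c := fun r => c (k-1-r))
    (u := fun r => A (r+1) z) (v := fun r => B r z)
    (w := fun r => deriv (B r) z) (x := fun r => Pc r z)
    (q := (2*ν+1)/z) (fun r _ => hrec r z hz hne)
  have hsplit : ∑ r ∈ Finset.range (k+1), A r z * c (k+1-1-r)
      = (∑ r ∈ Finset.range k, A (r+1) z * c (k-1-r)) + c k := by
    rw [Finset.sum_range_succ']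
    congr 1
    · exact Finset.sum_congr rfl fun r _ => by rw [show k+1-1-(r+1) = k-1-r from by omega]
    · rw [hA0 z, show k+1-1-0 = k from by omega, one_mul]
  unfold comb
  rw [hsplit]
  linear_combination hrec k z hz hne + 2*μ*hs

lemma comb_zero {μ : ℂ} {c : ℕ → ℂ} {B : ℕ → ℂ → ℂ} (k : ℕ)
    (hB0 : ∀ r, B r 0 = 0) : comb μ c B k 0 = 0 := by
  unfold comb
  rw [hB0 k, Finset.sum_eq_zero fun r _ => by rw [hB0 r, zero_mul]]
  ring

lemma comb_A_zero {μ : ℂ} {c : ℕ → ℂ} {A : ℕ → ℂ → ℂ} (k : ℕ)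
    (hA0 : ∀ z, A 0 z = 1) (hA1 : ∀ r, A (r+1) 0 = 0) :
    comb μ c A (k+1) 0 = 2*μ*c k := by
  unfold comb
  rw [hA1 k, Finset.sum_range_succ']
  rw [Finset.sum_eq_zero fun r _ => by rw [hA1 r, zero_mul]]
  rw [hA0 0, show k+1-1-0 = k from by omega]
  ring

/-- derivative of `B w / w`. -/
lemma deriv_div_id {B : ℂ → ℂ} {z : ℂ} (hB : DifferentiableAt ℂ B z) (hz : z ≠ 0) :
    deriv (fun w => B w / w) z = (deriv B z * z - B z)/z^2 := by
  rw [deriv_fun_div hB differentiableAt_fun_id hz]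
  simp [deriv_id'']

/-- derivative of `F w / w^2`. -/
lemma deriv_div_sq {F : ℂ → ℂ} {z : ℂ} (hF : DifferentiableAt ℂ F z) (hz : z ≠ 0) :
    deriv (fun w => F w / w^2) z = (deriv F z * z^2 - F z * (2*z))/z^4 := by
  rw [deriv_fun_div hF (differentiableAt_fun_id.fun_pow 2) (pow_ne_zero 2 hz)]
  rw [deriv_pow_field]
  norm_num
  ring


lemma Qstep (hR : 0 < R) {f : ℂ → ℂ} {μ : ℂ} {Ap Bp Am Bm : ℕ → ℂ → ℂ} {c : ℕ → ℂ}
    (hfe : ∀ z ∈ ball (0:ℂ) R, f (-z) = f z)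
    (hABp : OlverSolution (ball 0 R) f μ Ap Bp)
    (hnormp : ∀ s, Ap (s + 1) 0 = 0)
    (hABm : OlverSolution (ball 0 R) f (-μ) Am Bm)
    (hnormm : ∀ s, Am (s + 1) 0 = 0)
    {Pp : ℕ → ℂ → ℂ}
    (hPpa : ∀ r, AnalyticOnNhd ℂ (Pp r) (ball 0 R))
    (hPpd : ∀ r, ∀ z ∈ ball (0:ℂ) R, deriv (Pp r) z = f z * Bp r z)
    (hPprec : ∀ r, ∀ z ∈ ball (0:ℂ) R, z ≠ 0 →
      2 * Ap (r+1) z = ((2*μ+1)/z) * Bp r z - deriv (Bp r) z + Pp r z)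
    (s : ℕ) (hcs : c s = deriv (Bm s) 0)
    (hP : EqOn (Bm s) (comb μ c Bp s) (ball 0 R)) :
    ∀ z ∈ ball (0:ℂ) R, z ≠ 0 →
      Am (s + 1) z + (2 * μ / z) * Bm s z = comb μ c Ap (s+1) z := by
  obtain ⟨Pm, hPma, hPmd, hPmrec⟩ := hABm.recA s
  -- the function G is constant on the ball
  set G : ℂ → ℂ := fun z => Pm z - comb μ c Pp s z - 4*μ*c s with hGdef
  have hGanal : AnalyticOnNhd ℂ G (ball 0 R) :=
    (hPma.sub (comb_anal hPpa s)).sub analyticOnNhd_const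
  have hGd : ∀ z ∈ ball (0:ℂ) R, z ≠ 0 → deriv G z = 0 := by
    intro z hz _
    have hd1 : DifferentiableAt ℂ Pm z := (hPma z hz).differentiableAt
    have hd2 : DifferentiableAt ℂ (comb μ c Pp s) z :=
      ((comb_anal hPpa s) z hz).differentiableAt
    have hPcomb : comb μ c (fun r => deriv (Pp r)) s z = f z * comb μ c Bp s z := by
      have h1 : ∑ r ∈ Finset.range s, deriv (Pp r) z * c (s-1-r)
          = ∑ r ∈ Finset.range s, f z * (Bp r z * c (s-1-r)) :=
        Finset.sum_congr rfl fun r _ => by rw [hPpd r z hz]; ring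
      unfold comb
      beta_reduce
      rw [h1, ← Finset.mul_sum, hPpd s z hz]
      ring
    rw [hGdef]
    rw [deriv_fun_sub (hd1.fun_sub hd2) (differentiableAt_const _), deriv_const,
      deriv_fun_sub hd1 hd2, hPmd z hz, comb_deriv hPpa s hz, hPcomb, ← hP hz]
    ring
  have hGconst := const_extend hR hGanal hGd
  -- key algebraic identity off zero
  have hkey : ∀ z ∈ ball (0:ℂ) R, z ≠ 0 →
      2*(Am (s+1) z + (2*μ/z) * Bm s z - comb μ c Ap (s+1) z) = G z := by
    intro z hz hne
    have h1 := hPmrec z hz hne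
    have h2 := comb_recA (μ := μ) (c := c) hABp.A_zero hPprec s hz hne
    have h3 : Bm s z = comb μ c Bp s z := hP hz
    have h45 : deriv (Bm s) z = comb μ c (fun r => deriv (Bp r)) s z :=
      (derivEqOn isOpen_ball hP hz).trans (comb_deriv hABp.analB s hz)
    rw [hGdef]
    linear_combination h1 - h2 + ((2*μ+1)/z) * h3 - h45
  -- compute the constant via the limit at 0
  have hBm0 : Bm s 0 = 0 := B_zero hR hfe hABm s
  have hcomb0 : comb μ c Ap (s+1) 0 = 2*μ*c s := comb_A_zero (s) hABp.A_zero hnormp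
  have hT : Tendsto (fun z => 2*(Am (s+1) z + (2*μ/z) * Bm s z - comb μ c Ap (s+1) z))
      (𝓝[≠] (0:ℂ)) (𝓝 0) := by
    have t1 : Tendsto (Am (s+1)) (𝓝[≠] (0:ℂ)) (𝓝 0) := by
      have := (((hABm.analA (s+1)) 0 (zero_mem hR)).continuousAt.continuousWithinAt
        (s := {(0:ℂ)}ᶜ)).tendsto
      rwa [hnormm s] at this
    have t2 : Tendsto (fun z => Bm s z / z) (𝓝[≠] (0:ℂ)) (𝓝 (deriv (Bm s) 0)) :=
      tendsto_div_self ((hABm.analB s) 0 (zero_mem hR)) hBm0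
    have t3 : Tendsto (comb μ c Ap (s+1)) (𝓝[≠] (0:ℂ)) (𝓝 (2*μ*c s)) := by
      have := (((comb_anal (μ := μ) (c := c) hABp.analA (s+1)) 0 (zero_mem hR)).continuousAt.continuousWithinAt
        (s := {(0:ℂ)}ᶜ)).tendsto
      rwa [hcomb0] at this
    have t4 : Tendsto (fun z => 2*(Am (s+1) z + 2*μ*(Bm s z / z) - comb μ c Ap (s+1) z))
        (𝓝[≠] (0:ℂ)) (𝓝 (2*(0 + 2*μ*(deriv (Bm s) 0) - 2*μ*c s))) :=
      (((t1.add ((tendsto_const_nhds (x := 2*μ)).mul t2)).sub t3).const_mul 2)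
    have hval : 2*((0:ℂ) + 2*μ*(deriv (Bm s) 0) - 2*μ*c s) = 0 := by
      rw [hcs]; ring
    rw [hval] at t4
    refine t4.congr ?_
    intro z
    by_cases hz0 : z = 0
    · subst hz0; simp
    · field_simp
  have hEv : (fun z => 2*(Am (s+1) z + (2*μ/z) * Bm s z - comb μ c Ap (s+1) z))
      =ᶠ[𝓝[≠] (0:ℂ)] (fun _ => G 0) := by
    filter_upwards [mem_nhdsWithin_of_mem_nhds (isOpen_ball.mem_nhds (zero_mem hR)),
      self_mem_nhdsWithin] with z hz hne
    exact (hkey z hz hne).trans (hGconst z hz)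
  have hG0 : G 0 = 0 := by
    have hTc : Tendsto (fun _ : ℂ => G 0) (𝓝[≠] (0:ℂ)) (𝓝 0) := by
      rw [← tendsto_congr' hEv]; exact hT
    exact tendsto_nhds_unique tendsto_const_nhds hTc
  intro z hz hne
  have := (hkey z hz hne).trans ((hGconst z hz).trans hG0)
  linear_combination this / 2


lemma Pstep (hR : 0 < R) {f : ℂ → ℂ} {μ : ℂ} {Ap Bp Am Bm : ℕ → ℂ → ℂ} {c : ℕ → ℂ}
    (hfe : ∀ z ∈ ball (0:ℂ) R, f (-z) = f z)
    (hABp : OlverSolution (ball 0 R) f μ Ap Bp)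
    (hABm : OlverSolution (ball 0 R) f (-μ) Am Bm)
    (s : ℕ)
    (hQ : ∀ z ∈ ball (0:ℂ) R, z ≠ 0 →
      Am (s + 1) z + (2 * μ / z) * Bm s z = comb μ c Ap (s+1) z) :
    EqOn (Bm (s+1)) (comb μ c Bp (s+1)) (ball 0 R) := by
  obtain ⟨Pm, hPma, hPmd, hPmrec⟩ := hABm.recA s
  set U : Set ℂ := ball (0:ℂ) R \ {0} with hUdef
  have hUopen : IsOpen U := puncOpen
  have hF1 : EqOn (Am (s+1)) (fun w => comb μ c Ap (s+1) w - 2*μ*(Bm s w / w)) U := by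
    intro w hw
    have h := hQ w hw.1 (by simpa using hw.2)
    linear_combination h
  have hF2 : EqOn (fun w => 2 * comb μ c Ap (s+1) w)
      (fun w => (2*μ+1)*(Bm s w / w) - deriv (Bm s) w + Pm w) U := by
    intro w hw
    have h1 := hPmrec w hw.1 (by simpa using hw.2)
    have h2 := hQ w hw.1 (by simpa using hw.2)
    linear_combination h1 - 2*h2
  have hE2 : ∀ w ∈ U, deriv (Am (s+1)) w
      = deriv (comb μ c Ap (s+1)) w
        - 2*μ*((deriv (Bm s) w * w - Bm s w)/w^2) := by
    intro w hw
    have hwb : w ∈ ball (0:ℂ) R := hw.1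
    have hwne : w ≠ 0 := by simpa using hw.2
    have hdB : DifferentiableAt ℂ (Bm s) w := ((hABm.analB s) w hwb).differentiableAt
    have hddiv : DifferentiableAt ℂ (fun u => Bm s u / u) w :=
      hdB.div differentiableAt_fun_id hwne
    rw [derivEqOn hUopen hF1 hw,
      deriv_fun_sub (((comb_anal hABp.analA (s+1)) w hwb).differentiableAt)
        (hddiv.const_mul _),
      deriv_const_mul _ hddiv, deriv_div_id hdB hwne]
  have hE3 : ∀ z ∈ U, deriv (deriv (Am (s+1))) z
      = deriv (deriv (comb μ c Ap (s+1))) z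
        - 2*μ*(((deriv (deriv (Bm s)) z * z + deriv (Bm s) z - deriv (Bm s) z) * z^2
            - (deriv (Bm s) z * z - Bm s z) * (2*z))/z^4) := by
    intro z hz
    have hzb : z ∈ ball (0:ℂ) R := hz.1
    have hzne : z ≠ 0 := by simpa using hz.2
    have hEq : EqOn (deriv (Am (s+1)))
        (fun w => deriv (comb μ c Ap (s+1)) w
          - 2*μ*((deriv (Bm s) w * w - Bm s w)/w^2)) U :=
      fun w hw => hE2 w hw
    have hd1 : DifferentiableAt ℂ (deriv (comb μ c Ap (s+1))) z :=
      (((comb_anal hABp.analA (s+1)).deriv) z hzb).differentiableAt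
    have hdB : DifferentiableAt ℂ (Bm s) z := ((hABm.analB s) z hzb).differentiableAt
    have hdB' : DifferentiableAt ℂ (deriv (Bm s)) z :=
      (((hABm.analB s).deriv) z hzb).differentiableAt
    have hdF : DifferentiableAt ℂ (fun w => deriv (Bm s) w * w - Bm s w) z :=
      (hdB'.mul differentiableAt_fun_id).sub hdB
    have hddiv : DifferentiableAt ℂ (fun w => (deriv (Bm s) w * w - Bm s w)/w^2) z :=
      hdF.div (differentiableAt_fun_id.pow 2) (pow_ne_zero 2 hzne)
    rw [derivEqOn hUopen hEq hz,
      deriv_fun_sub hd1 (hddiv.const_mul _),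
      deriv_const_mul _ hddiv,
      deriv_div_sq hdF hzne,
      deriv_fun_sub (hdB'.fun_mul differentiableAt_fun_id) hdB,
      deriv_fun_mul hdB' differentiableAt_fun_id]
    simp only [deriv_id'']
    ring
  have hE4 : ∀ z ∈ U, 2 * deriv (comb μ c Ap (s+1)) z
      = (2*μ+1)*((deriv (Bm s) z * z - Bm s z)/z^2)
        - deriv (deriv (Bm s)) z + f z * Bm s z := by
    intro z hz
    have hzb : z ∈ ball (0:ℂ) R := hz.1
    have hzne : z ≠ 0 := by simpa using hz.2
    have hαdiff : DifferentiableAt ℂ (comb μ c Ap (s+1)) z :=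
      ((comb_anal hABp.analA (s+1)) z hzb).differentiableAt
    have hdB : DifferentiableAt ℂ (Bm s) z := ((hABm.analB s) z hzb).differentiableAt
    have hdB' : DifferentiableAt ℂ (deriv (Bm s)) z :=
      (((hABm.analB s).deriv) z hzb).differentiableAt
    have hdPm : DifferentiableAt ℂ Pm z := (hPma z hzb).differentiableAt
    have hddiv : DifferentiableAt ℂ (fun u => Bm s u / u) z :=
      hdB.div differentiableAt_fun_id hzne
    have h := derivEqOn hUopen hF2 hz
    rw [deriv_const_mul _ hαdiff,
      deriv_fun_add (((hddiv.const_mul _)).fun_sub hdB') hdPm,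
      deriv_fun_sub (hddiv.const_mul _) hdB',
      deriv_const_mul _ hddiv, deriv_div_id hdB hzne, hPmd z hzb] at h
    exact h
  have hE6 : ∀ z ∈ U, 2 * deriv (comb μ c Bp (s+1)) z
      = -(deriv (deriv (comb μ c Ap (s+1))) z) + f z * comb μ c Ap (s+1) z
        - ((2*μ+1)/z) * deriv (comb μ c Ap (s+1)) z := by
    intro z hz
    rw [comb_deriv hABp.analB (s+1) hz.1, comb_deriv2 hABp.analA (s+1) hz.1,
      comb_deriv hABp.analA (s+1) hz.1]
    exact comb_recB hABp c (s+1) hz.1 (by simpa using hz.2)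
  have hder : ∀ z ∈ ball (0:ℂ) R, z ≠ 0 →
      deriv (Bm (s+1)) z = deriv (comb μ c Bp (s+1)) z := by
    intro z hzb hzne
    have hz : z ∈ U := ⟨hzb, by simpa using hzne⟩
    have E1 := hQ z hzb hzne
    have E2 := hE2 z hz
    have E3 := hE3 z hz
    have E4 := hE4 z hz
    have E5 := hABm.recB (s+1) z hzb hzne
    have E6 := hE6 z hz
    field_simp at E1 E2 E3 E4 E5 E6
    have hkey : 2*z^4*(deriv (Bm (s+1)) z - deriv (comb μ c Bp (s+1)) z) = 0 := by
      linear_combination z^3*E5 - z^3*E6 + f z*z^3*E1 + (2*μ-1)*z*E2 - z*E3 + 2*μ*z*E4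
    have h2z : (2:ℂ)*z^4 ≠ 0 := mul_ne_zero two_ne_zero (pow_ne_zero 4 hzne)
    have := (mul_eq_zero.mp hkey).resolve_left h2z
    linear_combination this
  have hdEq : EqOn (deriv (Bm (s+1))) (deriv (comb μ c Bp (s+1))) (ball 0 R) :=
    eqOn_extend hR ((hABm.analB (s+1)).deriv) ((comb_anal hABp.analB (s+1)).deriv) hder
  have hδ := const_extend hR (g := fun w => Bm (s+1) w - comb μ c Bp (s+1) w)
    ((hABm.analB (s+1)).sub (comb_anal hABp.analB (s+1)))
    (fun z hz _ => by
      rw [deriv_fun_sub ((hABm.analB (s+1)) z hz).differentiableAt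
        ((comb_anal hABp.analB (s+1)) z hz).differentiableAt, hdEq hz]
      ring)
  intro z hz
  have h0 := hδ z hz
  have hBm0 : Bm (s+1) 0 = 0 := B_zero hR hfe hABm (s+1)
  have hcomb0 : comb μ c Bp (s+1) 0 = 0 :=
    comb_zero (s+1) (fun r => B_zero hR hfe hABp r)
  simp only [hBm0, hcomb0] at h0
  linear_combination h0


lemma Pzero (hR : 0 < R) {f : ℂ → ℂ} {μ : ℂ} {Ap Bp Am Bm : ℕ → ℂ → ℂ} {c : ℕ → ℂ}
    (hfe : ∀ z ∈ ball (0:ℂ) R, f (-z) = f z)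
    (hABp : OlverSolution (ball 0 R) f μ Ap Bp)
    (hABm : OlverSolution (ball 0 R) f (-μ) Am Bm) :
    EqOn (Bm 0) (comb μ c Bp 0) (ball 0 R) := by
  have hA0m : Am 0 = fun _ => (1:ℂ) := funext hABm.A_zero
  have hA0p : Ap 0 = fun _ => (1:ℂ) := funext hABp.A_zero
  have hder : ∀ z ∈ ball (0:ℂ) R, z ≠ 0 →
      deriv (fun w => Bm 0 w - Bp 0 w) z = 0 := by
    intro z hz hne
    have h1 := hABm.recB 0 z hz hne
    have h2 := hABp.recB 0 z hz hne
    rw [hA0m] at h1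
    rw [hA0p] at h2
    simp only [deriv_const'] at h1 h2
    rw [deriv_fun_sub ((hABm.analB 0) z hz).differentiableAt
      ((hABp.analB 0) z hz).differentiableAt]
    simp only [mul_zero, mul_one, neg_zero, zero_add, sub_zero] at h1 h2
    linear_combination (h1 - h2)/2
  have hδ := const_extend hR (g := fun w => Bm 0 w - Bp 0 w)
    ((hABm.analB 0).sub (hABp.analB 0)) hder
  intro z hz
  have h0 := hδ z hz
  have h0m : Bm 0 0 = 0 := B_zero hR hfe hABm 0
  have h0p : Bp 0 0 = 0 := B_zero hR hfe hABp 0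
  simp only [h0m, h0p] at h0
  show Bm 0 z = comb μ c Bp 0 z
  unfold comb
  simp only [Finset.range_zero, Finset.sum_empty]
  linear_combination h0

end OlverAux

/-- Theorem 5.2 (second part) of the paper: with `A_s(±μ,·), B_s(±μ,·)` the
normalized Olver solutions with parameters `μ` and `-μ`, the functions
`a_s(z) = A_s(-μ,z) + (2μ/z) B_{s-1}(-μ,z)` (for `s ≥ 1`) and `b_s(z) = B_s(-μ,z)`
satisfy `a_s(z) = A_s(μ,z) + 2μ ∑_{r=0}^{s-1} A_r(μ,z) B'_{s-1-r}(-μ,0)` and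
`b_s(z) = B_s(μ,z) + 2μ ∑_{r=0}^{s-1} B_r(μ,z) B'_{s-1-r}(-μ,0)`. -/
theorem olver_parameter_flip_formula (R : ℝ) (hR : 0 < R) (f : ℂ → ℂ) (μ : ℂ)
    (hf : AnalyticOnNhd ℂ f (Metric.ball 0 R))
    (hfe : ∀ z ∈ Metric.ball (0 : ℂ) R, f (-z) = f z)
    (Ap Bp Am Bm : ℕ → ℂ → ℂ)
    (hABp : OlverSolution (Metric.ball 0 R) f μ Ap Bp)
    (hnormp : ∀ s, Ap (s + 1) 0 = 0)
    (hABm : OlverSolution (Metric.ball 0 R) f (-μ) Am Bm)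
    (hnormm : ∀ s, Am (s + 1) 0 = 0) :
    (∀ s, ∀ z ∈ Metric.ball (0 : ℂ) R,
      Bm s z = Bp s z +
        2 * μ * ∑ r ∈ Finset.range s, Bp r z * deriv (Bm (s - 1 - r)) 0) ∧
    (∀ s, ∀ z ∈ Metric.ball (0 : ℂ) R, z ≠ 0 →
      Am (s + 1) z + (2 * μ / z) * Bm s z = Ap (s + 1) z +
        2 * μ * ∑ r ∈ Finset.range (s + 1), Ap r z * deriv (Bm (s - r)) 0) := by
  classical
  choose Pp hPp using hABp.recA
  have hPpa : ∀ r, AnalyticOnNhd ℂ (Pp r) (Metric.ball 0 R) := fun r => (hPp r).1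
  have hPpd : ∀ r, ∀ z ∈ Metric.ball (0:ℂ) R, deriv (Pp r) z = f z * Bp r z :=
    fun r => (hPp r).2.1
  have hPprec : ∀ r, ∀ z ∈ Metric.ball (0:ℂ) R, z ≠ 0 →
      2 * Ap (r+1) z = ((2*μ+1)/z) * Bp r z - deriv (Bp r) z + Pp r z :=
    fun r => (hPp r).2.2
  have main : ∀ s,
      Set.EqOn (Bm s) (OlverAux.comb μ (fun k => deriv (Bm k) 0) Bp s) (Metric.ball 0 R) ∧
      (∀ z ∈ Metric.ball (0:ℂ) R, z ≠ 0 →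
        Am (s+1) z + (2*μ/z) * Bm s z
          = OlverAux.comb μ (fun k => deriv (Bm k) 0) Ap (s+1) z) := by
    intro s
    induction s with
    | zero =>
      have hP := OlverAux.Pzero hR (c := fun k => deriv (Bm k) 0) hfe hABp hABm
      exact ⟨hP, OlverAux.Qstep hR hfe hABp hnormp hABm hnormm hPpa hPpd hPprec 0 rfl hP⟩
    | succ s ih =>
      have hP := OlverAux.Pstep hR hfe hABp hABm s ih.2
      exact ⟨hP, OlverAux.Qstep hR hfe hABp hnormp hABm hnormm hPpa hPpd hPprec (s+1) rfl hP⟩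
  constructor
  · intro s z hz
    have h1 := (main s).1 hz
    simpa [OlverAux.comb] using h1
  · intro s z hz hne
    have h1 := (main s).2 z hz hne
    have h2 : OlverAux.comb μ (fun k => deriv (Bm k) 0) Ap (s+1) z
        = Ap (s+1) z + 2*μ*∑ r ∈ Finset.range (s+1), Ap r z * deriv (Bm (s-r)) 0 := by
      unfold OlverAux.comb
      simp [Nat.add_sub_cancel]
    rw [h2] at h1
    exact h1
end

section
/- Define the formal power series F(u,μ) = 1 − 2μ Σ_{s≥0} B_s'(μ,0) u^{−(2s+2)} in the variable u^{−1}, where B_s(μ,·) comes from the normalized Olver recursion. Then F(u,μ)·F(u,−μ) = 1 as formal power series; equivalently, B_s'(−μ,0) = B_s'(μ,0) + 2μ Σ_{r=0}^{s−1} B_r'(μ,0) B'_{s−1−r}(−μ,0) for all s ≥ 0. -/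
open Metric Filter Set Finset Topology

section OlverAuxLemmas

variable {R : ℝ}

private lemma olv_neg_mem_ball {z : ℂ} (hz : z ∈ Metric.ball (0:ℂ) R) :
    -z ∈ Metric.ball (0:ℂ) R := by
  simpa [mem_ball_zero_iff] using hz

private lemma olv_const_on_ball (hR : 0 < R) {g : ℂ → ℂ}
    (hg : ∀ z ∈ Metric.ball (0:ℂ) R, DifferentiableAt ℂ g z)
    (hg' : ∀ z ∈ Metric.ball (0:ℂ) R, deriv g z = 0)
    {z : ℂ} (hz : z ∈ Metric.ball (0:ℂ) R) : g z = g 0 := by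
  have h0 : (0:ℂ) ∈ Metric.ball (0:ℂ) R := Metric.mem_ball_self hR
  refine (convex_ball (0:ℂ) R).is_const_of_fderivWithin_eq_zero
    (fun x hx => (hg x hx).differentiableWithinAt) ?_ hz h0
  intro x hx
  have hd : HasDerivAt g 0 x := by
    have h := (hg x hx).hasDerivAt
    rwa [hg' x hx] at h
  have hfd : HasFDerivAt g (0 : ℂ →L[ℂ] ℂ) x := by
    simpa using hd.hasFDerivAt
  exact hfd.hasFDerivWithinAt.fderivWithin (Metric.isOpen_ball.uniqueDiffOn x hx)

private lemma olv_eval_const {g : ℂ → ℂ} {c : ℂ}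
    (hc : ContinuousAt g 0)
    (hg : ∀ᶠ w in 𝓝[≠] (0:ℂ), g w = c) : g 0 = c := by
  have h1 : Tendsto g (𝓝[≠] (0:ℂ)) (𝓝 (g 0)) :=
    (hc.continuousWithinAt : ContinuousWithinAt g {(0:ℂ)}ᶜ 0)
  have h2 : Tendsto g (𝓝[≠] (0:ℂ)) (𝓝 c) := by
    refine Tendsto.congr' ?_ tendsto_const_nhds
    filter_upwards [hg] with w hw
    exact hw.symm
  exact tendsto_nhds_unique h1 h2

private lemma olv_const_of_deriv_zero_punctured (hR : 0 < R) {g : ℂ → ℂ}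
    (hg : ∀ z ∈ Metric.ball (0:ℂ) R, DifferentiableAt ℂ g z)
    (hc : ContinuousAt (deriv g) 0)
    (hg' : ∀ z ∈ Metric.ball (0:ℂ) R, z ≠ 0 → deriv g z = 0)
    {z : ℂ} (hz : z ∈ Metric.ball (0:ℂ) R) : g z = g 0 := by
  have h0 : (0:ℂ) ∈ Metric.ball (0:ℂ) R := Metric.mem_ball_self hR
  have hball : Metric.ball (0:ℂ) R ∈ 𝓝 (0:ℂ) := Metric.isOpen_ball.mem_nhds h0
  have hd0 : deriv g 0 = 0 := by
    refine olv_eval_const hc ?_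
    filter_upwards [self_mem_nhdsWithin, mem_nhdsWithin_of_mem_nhds hball] with w hw hw2
    exact hg' w hw2 hw
  refine olv_const_on_ball hR hg ?_ hz
  intro x hx
  rcases eq_or_ne x 0 with h | h
  · rw [h]; exact hd0
  · exact hg' x hx h

private lemma olv_deriv_of_even {g : ℂ → ℂ}
    (h : ∀ z ∈ Metric.ball (0:ℂ) R, g (-z) = g z)
    {z : ℂ} (hz : z ∈ Metric.ball (0:ℂ) R) : deriv g (-z) = - deriv g z := by
  have hev : (fun w => g (-w)) =ᶠ[𝓝 z] g := by
    filter_upwards [Metric.isOpen_ball.mem_nhds hz] with w hw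
    exact h w hw
  have h1 := hev.deriv_eq
  rw [deriv_comp_neg] at h1
  linear_combination -h1

private lemma olv_deriv_of_odd {g : ℂ → ℂ}
    (h : ∀ z ∈ Metric.ball (0:ℂ) R, g (-z) = - g z)
    {z : ℂ} (hz : z ∈ Metric.ball (0:ℂ) R) : deriv g (-z) = deriv g z := by
  have hev : (fun w => g (-w)) =ᶠ[𝓝 z] (fun w => - g w) := by
    filter_upwards [Metric.isOpen_ball.mem_nhds hz] with w hw
    exact h w hw
  have h1 := hev.deriv_eq
  rw [deriv_comp_neg, deriv.fun_neg] at h1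
  linear_combination -h1

private lemma olv_parity {f : ℂ → ℂ} {ν : ℂ} {A B : ℕ → ℂ → ℂ} (hR : 0 < R)
    (hfe : ∀ z ∈ Metric.ball (0:ℂ) R, f (-z) = f z)
    (hAB : OlverSolution (Metric.ball (0:ℂ) R) f ν A B) (s : ℕ) :
    (∀ z ∈ Metric.ball (0:ℂ) R, A s (-z) = A s z) ∧
      (∀ z ∈ Metric.ball (0:ℂ) R, B s (-z) = - B s z) := by
  have h0 : (0:ℂ) ∈ Metric.ball (0:ℂ) R := Metric.mem_ball_self hR
  have evenStep : ∀ n, (∀ z ∈ Metric.ball (0:ℂ) R, A n (-z) = A n z) →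
      ∀ z ∈ Metric.ball (0:ℂ) R, B n (-z) = - B n z := by
    intro n hA
    have hA' : ∀ z ∈ Metric.ball (0:ℂ) R, deriv (A n) (-z) = - deriv (A n) z :=
      fun z hz => olv_deriv_of_even hA hz
    have hA'0 : deriv (A n) 0 = 0 := by
      have h := hA' 0 h0
      rw [neg_zero] at h
      linear_combination h / 2
    have hB0 : B n 0 = 0 := by
      have h := hAB.recB₀ n
      rw [hA'0] at h
      linear_combination h / 2
    have hA'' : ∀ z ∈ Metric.ball (0:ℂ) R,
        deriv (deriv (A n)) (-z) = deriv (deriv (A n)) z :=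
      fun z hz => olv_deriv_of_odd hA' hz
    have hB' : ∀ z ∈ Metric.ball (0:ℂ) R, deriv (B n) (-z) = deriv (B n) z := by
      intro z hz
      rcases eq_or_ne z 0 with h | hz0
      · rw [h, neg_zero]
      · have h1 := hAB.recB n z hz hz0
        have h2 := hAB.recB n (-z) (olv_neg_mem_ball hz) (neg_ne_zero.mpr hz0)
        rw [hA'' z hz, hfe z hz, hA z hz, hA' z hz, div_neg] at h2
        linear_combination (h2 - h1) / 2
    have key : ∀ z ∈ Metric.ball (0:ℂ) R, B n z + B n (-z) = 0 := by
      intro z hz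
      have hdiff : ∀ x ∈ Metric.ball (0:ℂ) R,
          DifferentiableAt ℂ (fun w => B n w + B n (-w)) x := by
        intro x hx
        exact ((hAB.analB n x hx).differentiableAt).add
          (differentiableAt_comp_neg.mpr
            (hAB.analB n (-x) (olv_neg_mem_ball hx)).differentiableAt)
      have hconst := olv_const_on_ball (g := fun w => B n w + B n (-w)) hR hdiff ?_ hz
      · simpa [hB0] using hconst
      · intro x hx
        have hd1 : DifferentiableAt ℂ (B n) x := (hAB.analB n x hx).differentiableAt
        have hd2 : DifferentiableAt ℂ (fun w => B n (-w)) x :=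
          differentiableAt_comp_neg.mpr
            (hAB.analB n (-x) (olv_neg_mem_ball hx)).differentiableAt
        rw [deriv_fun_add hd1 hd2, deriv_comp_neg, hB' x hx]
        ring
    intro z hz
    have h := key z hz
    linear_combination h
  have oddStep : ∀ n, (∀ z ∈ Metric.ball (0:ℂ) R, B n (-z) = - B n z) →
      ∀ z ∈ Metric.ball (0:ℂ) R, A (n+1) (-z) = A (n+1) z := by
    intro n hB
    have hB' : ∀ z ∈ Metric.ball (0:ℂ) R, deriv (B n) (-z) = deriv (B n) z :=
      fun z hz => olv_deriv_of_odd hB hz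
    obtain ⟨P, hPa, hP', hPrec⟩ := hAB.recA n
    have hPeven : ∀ z ∈ Metric.ball (0:ℂ) R, P (-z) = P z := by
      intro z hz
      have hdiff : ∀ x ∈ Metric.ball (0:ℂ) R,
          DifferentiableAt ℂ (fun w => P w - P (-w)) x := by
        intro x hx
        exact ((hPa x hx).differentiableAt).sub
          (differentiableAt_comp_neg.mpr (hPa (-x) (olv_neg_mem_ball hx)).differentiableAt)
      have hconst := olv_const_on_ball (g := fun w => P w - P (-w)) hR hdiff ?_ hz
      · have h1 : P z - P (-z) = 0 := by simpa using hconst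
        linear_combination -h1
      · intro x hx
        have hd1 := (hPa x hx).differentiableAt
        have hd2 : DifferentiableAt ℂ (fun w => P (-w)) x :=
          differentiableAt_comp_neg.mpr (hPa (-x) (olv_neg_mem_ball hx)).differentiableAt
        rw [deriv_fun_sub hd1 hd2, deriv_comp_neg, hP' x hx, hP' (-x) (olv_neg_mem_ball hx),
          hfe x hx, hB x hx]
        ring
    intro z hz
    rcases eq_or_ne z 0 with h | hz0
    · rw [h, neg_zero]
    · have h1 := hPrec z hz hz0
      have h2 := hPrec (-z) (olv_neg_mem_ball hz) (neg_ne_zero.mpr hz0)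
      rw [hB z hz, hB' z hz, hPeven z hz, div_neg] at h2
      linear_combination (h2 - h1) / 2
  induction s with
  | zero =>
    have hA0 : ∀ z ∈ Metric.ball (0:ℂ) R, A 0 (-z) = A 0 z := by
      intro z _
      rw [hAB.A_zero, hAB.A_zero]
    exact ⟨hA0, evenStep 0 hA0⟩
  | succ n ih =>
    have hA := oddStep n ih.2
    exact ⟨hA, evenStep (n+1) hA⟩

end OlverAuxLemmas

/-- coefficients `γ_0 = 1`, `γ_{j+1} = -2μ B_j'(μ,0)` -/
noncomputable def olverGam (μ : ℂ) (Bp : ℕ → ℂ → ℂ) : ℕ → ℂ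
  | 0 => 1
  | j + 1 => -(2*μ) * deriv (Bp j) 0

/-- `gg 0 = 0`, `gg (s+1) = B_s(μ,z)/z` (extended by `B_s'(μ,0)` at `0`) -/
noncomputable def olverGG (Bp : ℕ → ℂ → ℂ) : ℕ → ℂ → ℂ
  | 0 => fun _ => 0
  | j + 1 => dslope (Bp j) 0

noncomputable def olverSA (μ : ℂ) (Bp Am : ℕ → ℂ → ℂ) (s : ℕ) : ℂ → ℂ :=
  fun z => ∑ j ∈ Finset.range (s+1), olverGam μ Bp j * Am (s-j) z

noncomputable def olverSB (μ : ℂ) (Bp Bm : ℕ → ℂ → ℂ) (s : ℕ) : ℂ → ℂ :=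
  fun z => ∑ j ∈ Finset.range (s+1), olverGam μ Bp j * Bm (s-j) z

private lemma olv_differentiableAt_gamsum {c : ℕ → ℂ} {F : ℕ → ℂ → ℂ} {n : ℕ} {z : ℂ}
    (hd : ∀ j ∈ Finset.range n, DifferentiableAt ℂ (F j) z) :
    DifferentiableAt ℂ (fun w => ∑ j ∈ Finset.range n, c j * F j w) z :=
  DifferentiableAt.fun_sum fun j hj => (hd j hj).const_mul _

private lemma olv_deriv_gamsum {c : ℕ → ℂ} {F : ℕ → ℂ → ℂ} {n : ℕ} {z : ℂ}
    (hd : ∀ j ∈ Finset.range n, DifferentiableAt ℂ (F j) z) :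
    deriv (fun w => ∑ j ∈ Finset.range n, c j * F j w) z
      = ∑ j ∈ Finset.range n, c j * deriv (F j) z := by
  rw [deriv_fun_sum (fun j hj => (hd j hj).const_mul _)]
  exact Finset.sum_congr rfl fun j hj => deriv_const_mul _ (hd j hj)

/-- The identity `F(u,μ)·F(u,-μ) = 1` for the formal power series
`F(u,μ) = 1 - 2μ ∑_{s≥0} B_s'(μ,0) u^{-(2s+2)}`, stated equivalently as the
convolution identity
`B_s'(-μ,0) = B_s'(μ,0) + 2μ ∑_{r=0}^{s-1} B_r'(μ,0) B'_{s-1-r}(-μ,0)`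
on the coefficients, where `B_s(±μ,·)` come from the normalized Olver
recursions with parameters `μ` and `-μ`. -/
theorem olver_F_reciprocal (R : ℝ) (hR : 0 < R) (f : ℂ → ℂ) (μ : ℂ)
    (hf : AnalyticOnNhd ℂ f (Metric.ball 0 R))
    (hfe : ∀ z ∈ Metric.ball (0 : ℂ) R, f (-z) = f z)
    (Ap Bp Am Bm : ℕ → ℂ → ℂ)
    (hABp : OlverSolution (Metric.ball 0 R) f μ Ap Bp)
    (hnormp : ∀ s, Ap (s + 1) 0 = 0)
    (hABm : OlverSolution (Metric.ball 0 R) f (-μ) Am Bm)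
    (hnormm : ∀ s, Am (s + 1) 0 = 0) :
    ∀ s : ℕ, deriv (Bm s) 0 = deriv (Bp s) 0 +
      2 * μ * ∑ r ∈ Finset.range s, deriv (Bp r) 0 * deriv (Bm (s - 1 - r)) 0 := by
  classical
  have h0 : (0:ℂ) ∈ Metric.ball (0:ℂ) R := Metric.mem_ball_self hR
  have hball0 : Metric.ball (0:ℂ) R ∈ 𝓝 (0:ℂ) := Metric.isOpen_ball.mem_nhds h0
  -- parity consequences
  have hBp0 : ∀ j, Bp j 0 = 0 := by
    intro j
    have h := (olv_parity hR hfe hABp j).2 0 h0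
    rw [neg_zero] at h
    linear_combination h / 2
  have hBm0 : ∀ j, Bm j 0 = 0 := by
    intro j
    have h := (olv_parity hR hfe hABm j).2 0 h0
    rw [neg_zero] at h
    linear_combination h / 2
  -- antiderivatives for the minus family
  choose Pm hPma hPmd hPmrec using hABm.recA
  -- differentiability packs
  have hApdiff : ∀ j, ∀ z ∈ Metric.ball (0:ℂ) R, DifferentiableAt ℂ (Ap j) z :=
    fun j z hz => (hABp.analA j z hz).differentiableAt
  have hBpdiff : ∀ j, ∀ z ∈ Metric.ball (0:ℂ) R, DifferentiableAt ℂ (Bp j) z :=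
    fun j z hz => (hABp.analB j z hz).differentiableAt
  have hAmdiff : ∀ j, ∀ z ∈ Metric.ball (0:ℂ) R, DifferentiableAt ℂ (Am j) z :=
    fun j z hz => (hABm.analA j z hz).differentiableAt
  have hBmdiff : ∀ j, ∀ z ∈ Metric.ball (0:ℂ) R, DifferentiableAt ℂ (Bm j) z :=
    fun j z hz => (hABm.analB j z hz).differentiableAt
  have hAmdiff' : ∀ j, ∀ z ∈ Metric.ball (0:ℂ) R, DifferentiableAt ℂ (deriv (Am j)) z :=
    fun j z hz => (((hABm.analA j).deriv) z hz).differentiableAt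
  have hBmdiff' : ∀ j, ∀ z ∈ Metric.ball (0:ℂ) R, DifferentiableAt ℂ (deriv (Bm j)) z :=
    fun j z hz => (((hABm.analB j).deriv) z hz).differentiableAt
  have hBpdiff' : ∀ j, ∀ z ∈ Metric.ball (0:ℂ) R, DifferentiableAt ℂ (deriv (Bp j)) z :=
    fun j z hz => (((hABp.analB j).deriv) z hz).differentiableAt
  -- SA/SB facts
  have hSAd : ∀ n, ∀ z ∈ Metric.ball (0:ℂ) R, DifferentiableAt ℂ (olverSA μ Bp Am n) z :=
    fun n z hz => olv_differentiableAt_gamsum (fun j _ => hAmdiff _ z hz)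
  have hSBd : ∀ n, ∀ z ∈ Metric.ball (0:ℂ) R, DifferentiableAt ℂ (olverSB μ Bp Bm n) z :=
    fun n z hz => olv_differentiableAt_gamsum (fun j _ => hBmdiff _ z hz)
  have hSA' : ∀ n, ∀ z ∈ Metric.ball (0:ℂ) R, deriv (olverSA μ Bp Am n) z
      = ∑ j ∈ Finset.range (n+1), olverGam μ Bp j * deriv (Am (n-j)) z :=
    fun n z hz => olv_deriv_gamsum (fun j _ => hAmdiff _ z hz)
  have hSB' : ∀ n, ∀ z ∈ Metric.ball (0:ℂ) R, deriv (olverSB μ Bp Bm n) z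
      = ∑ j ∈ Finset.range (n+1), olverGam μ Bp j * deriv (Bm (n-j)) z :=
    fun n z hz => olv_deriv_gamsum (fun j _ => hBmdiff _ z hz)
  have hSA'' : ∀ n, ∀ z ∈ Metric.ball (0:ℂ) R, deriv (deriv (olverSA μ Bp Am n)) z
      = ∑ j ∈ Finset.range (n+1), olverGam μ Bp j * deriv (deriv (Am (n-j))) z := by
    intro n z hz
    have hev : deriv (olverSA μ Bp Am n)
        =ᶠ[𝓝 z] fun w => ∑ j ∈ Finset.range (n+1), olverGam μ Bp j * deriv (Am (n-j)) w := by
      filter_upwards [Metric.isOpen_ball.mem_nhds hz] with w hw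
      exact hSA' n w hw
    rw [hev.deriv_eq]
    exact olv_deriv_gamsum (fun j _ => hAmdiff' _ z hz)
  have hSB0 : ∀ n, olverSB μ Bp Bm n 0 = 0 := by
    intro n
    unfold olverSB
    exact Finset.sum_eq_zero fun j _ => by rw [hBm0, mul_zero]
  -- summed minus-family recB
  have hrecBm : ∀ n, ∀ z ∈ Metric.ball (0:ℂ) R, z ≠ 0 →
      2 * deriv (olverSB μ Bp Bm n) z =
        -(deriv (deriv (olverSA μ Bp Am n)) z) + f z * olverSA μ Bp Am n z
          - ((2*(-μ)+1)/z) * deriv (olverSA μ Bp Am n) z := by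
    intro n z hz hz0
    rw [hSB' n z hz, hSA'' n z hz, hSA' n z hz]
    show 2 * ∑ j ∈ Finset.range (n+1), olverGam μ Bp j * deriv (Bm (n-j)) z
      = -(∑ j ∈ Finset.range (n+1), olverGam μ Bp j * deriv (deriv (Am (n-j))) z)
        + f z * (∑ j ∈ Finset.range (n+1), olverGam μ Bp j * Am (n-j) z)
        - ((2*(-μ)+1)/z) * ∑ j ∈ Finset.range (n+1), olverGam μ Bp j * deriv (Am (n-j)) z
    rw [Finset.mul_sum]
    calc ∑ j ∈ Finset.range (n+1), 2 * (olverGam μ Bp j * deriv (Bm (n-j)) z)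
        = ∑ j ∈ Finset.range (n+1),
            (-(olverGam μ Bp j * deriv (deriv (Am (n-j))) z)
              + f z * (olverGam μ Bp j * Am (n-j) z)
              - ((2*(-μ)+1)/z) * (olverGam μ Bp j * deriv (Am (n-j)) z)) := by
          refine Finset.sum_congr rfl fun j _ => ?_
          have h := hABm.recB (n-j) z hz hz0
          linear_combination olverGam μ Bp j * h
      _ = _ := by
          rw [Finset.sum_sub_distrib, Finset.sum_add_distrib, Finset.sum_neg_distrib,
            ← Finset.mul_sum, ← Finset.mul_sum]
  -- Step B : from the A-identity at level s get the B-identity at level s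
  have stepB : ∀ s, (∀ z ∈ Metric.ball (0:ℂ) R,
        Ap s z = olverSA μ Bp Am s z + (2*μ) * olverGG Bp s z) →
      ∀ z ∈ Metric.ball (0:ℂ) R, Bp s z = olverSB μ Bp Bm s z := by
    intro s hA
    have key : ∀ z ∈ Metric.ball (0:ℂ) R, z ≠ 0 →
        deriv (Bp s) z = deriv (olverSB μ Bp Bm s) z := by
      rcases s with _ | k
      · -- s = 0
        intro z hz hz0
        have hAp0 : Ap 0 = fun _ => (1:ℂ) := funext hABp.A_zero
        have hSA0 : olverSA μ Bp Am 0 = fun _ => (1:ℂ) := by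
          funext w
          simp [olverSA, olverGam, hABm.A_zero]
        have h1 := hABp.recB 0 z hz hz0
        have h2 := hrecBm 0 z hz hz0
        rw [hAp0] at h1
        rw [hSA0] at h2
        simp at h1 h2
        linear_combination (h1 - h2) / 2
      · -- s = k+1
        intro z hz hz0
        obtain ⟨Pp, hPpa, hPpd, hPprec⟩ := hABp.recA k
        have hbd : DifferentiableAt ℂ (Bp k) z := hBpdiff k z hz
        have hbd' : DifferentiableAt ℂ (deriv (Bp k)) z := hBpdiff' k z hz
        have hb0 := hBp0 k
        have hggdef : olverGG Bp (k+1) = dslope (Bp k) 0 := rfl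
        have hggeq : ∀ w : ℂ, w ≠ 0 → olverGG Bp (k+1) w = Bp k w / w := by
          intro w hw
          rw [hggdef, dslope_of_ne _ hw, slope_def_field, hb0]
          simp
        have hggdiff : ∀ w ∈ Metric.ball (0:ℂ) R, w ≠ 0 →
            DifferentiableAt ℂ (olverGG Bp (k+1)) w := by
          intro w hw hw0
          have hev : olverGG Bp (k+1) =ᶠ[𝓝 w] fun u => Bp k u / u := by
            filter_upwards [eventually_ne_nhds hw0] with u hu
            exact hggeq u hu
          exact (((hBpdiff k w hw).div differentiableAt_fun_id hw0)).congr_of_eventuallyEq hev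
        have hgg' : ∀ w ∈ Metric.ball (0:ℂ) R, w ≠ 0 →
            deriv (olverGG Bp (k+1)) w = (deriv (Bp k) w * w - Bp k w) / w^2 := by
          intro w hw hw0
          have hev : olverGG Bp (k+1) =ᶠ[𝓝 w] fun u => Bp k u / u := by
            filter_upwards [eventually_ne_nhds hw0] with u hu
            exact hggeq u hu
          rw [hev.deriv_eq, deriv_fun_div (hBpdiff k w hw) differentiableAt_fun_id hw0]
          simp [deriv_id'']
        -- cleared identities
        have E6 : deriv (olverGG Bp (k+1)) z * z^2 = deriv (Bp k) z * z - Bp k z := by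
          rw [hgg' z hz hz0]
          field_simp
        have E9 : olverGG Bp (k+1) z * z = Bp k z := by
          rw [hggeq z hz0]
          field_simp
        have E7 : deriv (deriv (olverGG Bp (k+1))) z * z^3
            = deriv (deriv (Bp k)) z * z^2 - 2*deriv (Bp k) z * z + 2*Bp k z := by
          have hev : deriv (olverGG Bp (k+1))
              =ᶠ[𝓝 z] fun u => (deriv (Bp k) u * u - Bp k u) / u^2 := by
            filter_upwards [Metric.isOpen_ball.mem_nhds hz, eventually_ne_nhds hz0]
              with u hu hu0
            exact hgg' u hu hu0
          have hnum : DifferentiableAt ℂ (fun u => deriv (Bp k) u * u - Bp k u) z :=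
            (hbd'.mul differentiableAt_fun_id).sub hbd
          rw [hev.deriv_eq, deriv_fun_div hnum (differentiableAt_pow 2) (pow_ne_zero 2 hz0),
            deriv_fun_sub (hbd'.fun_mul differentiableAt_fun_id) hbd,
            deriv_fun_mul hbd' differentiableAt_fun_id, deriv_pow_field]
          simp only [deriv_id'', mul_one, Nat.cast_ofNat, pow_one]
          field_simp
          ring
        have hdiv : DifferentiableAt ℂ (fun w : ℂ => (2*μ+1)/w) z :=
          (differentiableAt_const _).div differentiableAt_fun_id hz0
        have hdinv : deriv (fun w : ℂ => (2*μ+1)/w) z = -(2*μ+1)/z^2 := by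
          rw [deriv_fun_div (differentiableAt_const _) differentiableAt_fun_id hz0]
          simp only [deriv_const', deriv_id'']
          field_simp
          ring
        have E8 : 2 * deriv (Ap (k+1)) z * z^3
            = ((2*μ+1)*(deriv (Bp k) z * z - Bp k z)) * z
              - deriv (deriv (Bp k)) z * z^3 + f z * Bp k z * z^3 := by
          have hev : Ap (k+1) =ᶠ[𝓝 z]
              fun w => (((2*μ+1)/w) * Bp k w - deriv (Bp k) w + Pp w)/2 := by
            filter_upwards [Metric.isOpen_ball.mem_nhds hz, eventually_ne_nhds hz0]
              with w hw hw0
            have h := hPprec w hw hw0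
            linear_combination h / 2
          have h := hev.deriv_eq
          rw [deriv_div_const,
            deriv_fun_add ((hdiv.fun_mul hbd).fun_sub hbd') ((hPpa z hz).differentiableAt),
            deriv_fun_sub (hdiv.fun_mul hbd) hbd', deriv_fun_mul hdiv hbd, hdinv, hPpd z hz] at h
          field_simp at h
          linear_combination z * h
        -- E3, E4, E5
        have E3 : Ap (k+1) z
            = olverSA μ Bp Am (k+1) z + (2*μ) * olverGG Bp (k+1) z := hA z hz
        have hApd : ∀ w ∈ Metric.ball (0:ℂ) R, w ≠ 0 →
            deriv (Ap (k+1)) w = deriv (olverSA μ Bp Am (k+1)) w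
              + (2*μ) * deriv (olverGG Bp (k+1)) w := by
          intro w hw hw0
          have hev : Ap (k+1) =ᶠ[𝓝 w]
              fun u => olverSA μ Bp Am (k+1) u + (2*μ) * olverGG Bp (k+1) u := by
            filter_upwards [Metric.isOpen_ball.mem_nhds hw] with u hu
            exact hA u hu
          rw [hev.deriv_eq,
            deriv_fun_add (hSAd (k+1) w hw) ((hggdiff w hw hw0).const_mul _),
            deriv_const_mul _ (hggdiff w hw hw0)]
        have E4 : deriv (Ap (k+1)) z = deriv (olverSA μ Bp Am (k+1)) z
            + (2*μ) * deriv (olverGG Bp (k+1)) z := hApd z hz hz0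
        have hdSA' : DifferentiableAt ℂ (deriv (olverSA μ Bp Am (k+1))) z := by
          have hev : deriv (olverSA μ Bp Am (k+1)) =ᶠ[𝓝 z]
              fun u => ∑ j ∈ Finset.range (k+2), olverGam μ Bp j * deriv (Am (k+1-j)) u := by
            filter_upwards [Metric.isOpen_ball.mem_nhds hz] with u hu
            exact hSA' (k+1) u hu
          exact (olv_differentiableAt_gamsum
            (fun j _ => hAmdiff' _ z hz)).congr_of_eventuallyEq hev
        have hdGG' : DifferentiableAt ℂ (deriv (olverGG Bp (k+1))) z := by
          have hev : deriv (olverGG Bp (k+1)) =ᶠ[𝓝 z]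
              fun u => (deriv (Bp k) u * u - Bp k u) / u^2 := by
            filter_upwards [Metric.isOpen_ball.mem_nhds hz, eventually_ne_nhds hz0]
              with u hu hu0
            exact hgg' u hu hu0
          exact ((((hbd'.mul differentiableAt_fun_id).sub hbd).div
            (differentiableAt_pow 2) (pow_ne_zero 2 hz0))).congr_of_eventuallyEq hev
        have E5 : deriv (deriv (Ap (k+1))) z = deriv (deriv (olverSA μ Bp Am (k+1))) z
            + (2*μ) * deriv (deriv (olverGG Bp (k+1))) z := by
          have hev : deriv (Ap (k+1)) =ᶠ[𝓝 z]
              fun u => deriv (olverSA μ Bp Am (k+1)) u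
                + (2*μ) * deriv (olverGG Bp (k+1)) u := by
            filter_upwards [Metric.isOpen_ball.mem_nhds hz, eventually_ne_nhds hz0]
              with u hu hu0
            exact hApd u hu hu0
          rw [hev.deriv_eq, deriv_fun_add hdSA' (hdGG'.const_mul _),
            deriv_const_mul _ hdGG']
        -- E1, E2
        have E1 : 2 * deriv (Bp (k+1)) z * z
            = (-(deriv (deriv (Ap (k+1))) z) + f z * Ap (k+1) z) * z
              - (2*μ+1) * deriv (Ap (k+1)) z := by
          have h := hABp.recB (k+1) z hz hz0
          rw [h]
          field_simp
        have E2 : 2 * deriv (olverSB μ Bp Bm (k+1)) z * z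
            = (-(deriv (deriv (olverSA μ Bp Am (k+1))) z)
                + f z * olverSA μ Bp Am (k+1) z) * z
              - (2*(-μ)+1) * deriv (olverSA μ Bp Am (k+1)) z := by
          have h := hrecBm (k+1) z hz hz0
          rw [h]
          field_simp
        -- final combination
        have final : 2*z^4*(deriv (Bp (k+1)) z - deriv (olverSB μ Bp Bm (k+1)) z) = 0 := by
          linear_combination (z^3)*E1 - (z^3)*E2 + (f z*z^4)*E3 - ((1-2*μ)*z^3)*E4
            - (z^4)*E5 - (2*μ*(1-2*μ)*z)*E6 - (2*μ*z)*E7 - (2*μ)*E8 + (2*μ*f z*z^3)*E9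
        have h2z : (2:ℂ)*z^4 ≠ 0 := mul_ne_zero two_ne_zero (pow_ne_zero 4 hz0)
        have hsub : deriv (Bp (k+1)) z - deriv (olverSB μ Bp Bm (k+1)) z = 0 :=
          (mul_eq_zero.mp final).resolve_left h2z
        linear_combination hsub
    -- conclude Step B
    intro z hz
    have hcont : ContinuousAt (deriv (fun w => Bp s w - olverSB μ Bp Bm s w)) 0 := by
      have hev : (fun w => deriv (Bp s) w
            - ∑ j ∈ Finset.range (s+1), olverGam μ Bp j * deriv (Bm (s-j)) w)
          =ᶠ[𝓝 0] deriv (fun w => Bp s w - olverSB μ Bp Bm s w) := by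
        filter_upwards [hball0] with w hw
        rw [deriv_fun_sub (hBpdiff s w hw) (hSBd s w hw), hSB' s w hw]
      refine ContinuousAt.congr ?_ hev
      refine ContinuousAt.sub ((((hABp.analB s).deriv) 0 h0).continuousAt) ?_
      exact (olv_differentiableAt_gamsum (fun j _ => hBmdiff' _ 0 h0)).continuousAt
    have hconst := olv_const_of_deriv_zero_punctured
      (g := fun w => Bp s w - olverSB μ Bp Bm s w) hR
      (fun x hx => (hBpdiff s x hx).sub (hSBd s x hx)) hcont ?_ hz
    · have h1 : Bp s z - olverSB μ Bp Bm s z = Bp s 0 - olverSB μ Bp Bm s 0 := hconst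
      rw [hBp0 s, hSB0 s] at h1
      linear_combination h1
    · intro x hx hx0
      rw [deriv_fun_sub (hBpdiff s x hx) (hSBd s x hx), key x hx hx0, sub_self]
  -- Step A : from the B-identity at level s get the A-identity at level s+1
  have stepA : ∀ s, (∀ z ∈ Metric.ball (0:ℂ) R, Bp s z = olverSB μ Bp Bm s z) →
      ∀ z ∈ Metric.ball (0:ℂ) R,
        Ap (s+1) z = olverSA μ Bp Am (s+1) z + (2*μ) * olverGG Bp (s+1) z := by
    intro s hB
    obtain ⟨Pp, hPpa, hPpd, hPprec⟩ := hABp.recA s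
    have hggdef : olverGG Bp (s+1) = dslope (Bp s) 0 := rfl
    have hQconst : ∀ z ∈ Metric.ball (0:ℂ) R,
        Pp z - (∑ j ∈ Finset.range (s+1), olverGam μ Bp j * Pm (s-j) z)
          = Pp 0 - (∑ j ∈ Finset.range (s+1), olverGam μ Bp j * Pm (s-j) 0) := by
      intro z hz
      refine olv_const_on_ball
        (g := fun w => Pp w - ∑ j ∈ Finset.range (s+1), olverGam μ Bp j * Pm (s-j) w)
        hR ?_ ?_ hz
      · intro x hx
        exact ((hPpa x hx).differentiableAt).sub
          (olv_differentiableAt_gamsum (fun j _ => (hPma _ x hx).differentiableAt))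
      · intro x hx
        rw [deriv_fun_sub ((hPpa x hx).differentiableAt)
            (olv_differentiableAt_gamsum (fun j _ => (hPma _ x hx).differentiableAt)),
          hPpd x hx, olv_deriv_gamsum (fun j _ => (hPma _ x hx).differentiableAt)]
        have hsum : ∑ j ∈ Finset.range (s+1), olverGam μ Bp j * deriv (Pm (s-j)) x
            = f x * olverSB μ Bp Bm s x := by
          calc ∑ j ∈ Finset.range (s+1), olverGam μ Bp j * deriv (Pm (s-j)) x
              = ∑ j ∈ Finset.range (s+1), f x * (olverGam μ Bp j * Bm (s-j) x) := by
                refine Finset.sum_congr rfl fun j _ => ?_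
                rw [hPmd _ x hx]
                ring
            _ = f x * olverSB μ Bp Bm s x := by
                rw [← Finset.mul_sum]
                rfl
        rw [hsum, ← hB x hx]
        ring
    have hDconst : ∀ z ∈ Metric.ball (0:ℂ) R, z ≠ 0 →
        Ap (s+1) z - (2*μ) * olverGG Bp (s+1) z - olverSA μ Bp Am (s+1) z
          = (Pp 0 - (∑ j ∈ Finset.range (s+1), olverGam μ Bp j * Pm (s-j) 0))/2
            - olverGam μ Bp (s+1) := by
      intro z hz hz0
      have h1 := hPprec z hz hz0
      have h2 : 2 * olverSA μ Bp Am (s+1) z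
          = (2*(-μ)+1)/z * olverSB μ Bp Bm s z - deriv (olverSB μ Bp Bm s) z
            + (∑ j ∈ Finset.range (s+1), olverGam μ Bp j * Pm (s-j) z)
            + 2 * olverGam μ Bp (s+1) := by
        show 2 * ∑ j ∈ Finset.range (s+2), olverGam μ Bp j * Am (s+1-j) z = _
        rw [Finset.mul_sum, Finset.sum_range_succ]
        have hlast : 2 * (olverGam μ Bp (s+1) * Am (s+1-(s+1)) z)
            = 2 * olverGam μ Bp (s+1) := by
          rw [Nat.sub_self, hABm.A_zero]
          ring
        have hmain : ∑ j ∈ Finset.range (s+1), 2 * (olverGam μ Bp j * Am (s+1-j) z)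
            = (2*(-μ)+1)/z * olverSB μ Bp Bm s z - deriv (olverSB μ Bp Bm s) z
              + ∑ j ∈ Finset.range (s+1), olverGam μ Bp j * Pm (s-j) z := by
          have step1 : ∀ j ∈ Finset.range (s+1), 2 * (olverGam μ Bp j * Am (s+1-j) z)
              = (2*(-μ)+1)/z * (olverGam μ Bp j * Bm (s-j) z)
                - olverGam μ Bp j * deriv (Bm (s-j)) z
                + olverGam μ Bp j * Pm (s-j) z := by
            intro j hj
            have hj' : j ≤ s := Nat.lt_succ_iff.mp (Finset.mem_range.mp hj)
            have hsubn : s + 1 - j = (s - j) + 1 := by omega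
            rw [hsubn]
            have h := hPmrec (s-j) z hz hz0
            linear_combination olverGam μ Bp j * h
          rw [Finset.sum_congr rfl step1, Finset.sum_add_distrib, Finset.sum_sub_distrib,
            ← Finset.mul_sum, ← hSB' s z hz]
          rfl
        rw [hmain, hlast]
      have hdSB : deriv (Bp s) z = deriv (olverSB μ Bp Bm s) z := by
        have hev : Bp s =ᶠ[𝓝 z] olverSB μ Bp Bm s := by
          filter_upwards [Metric.isOpen_ball.mem_nhds hz] with w hw
          exact hB w hw
        exact hev.deriv_eq
      have hQ := hQconst z hz
      have hggz : olverGG Bp (s+1) z = Bp s z / z := by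
        rw [hggdef, dslope_of_ne _ hz0, slope_def_field, hBp0 s]
        simp
      rw [hggz]
      linear_combination (h1 - h2)/2 + ((2*(-μ)+1)/z) * (hB z hz) / 2 - hdSB/2 + hQ/2
    -- value of the constant via continuity at 0
    have hSA0val : olverSA μ Bp Am (s+1) 0 = olverGam μ Bp (s+1) := by
      show ∑ j ∈ Finset.range (s+2), olverGam μ Bp j * Am (s+1-j) 0 = _
      rw [Finset.sum_range_succ]
      have hz : ∑ j ∈ Finset.range (s+1), olverGam μ Bp j * Am (s+1-j) 0 = 0 := by
        refine Finset.sum_eq_zero fun j hj => ?_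
        have hj' : j ≤ s := Nat.lt_succ_iff.mp (Finset.mem_range.mp hj)
        have hsubn : s + 1 - j = (s - j) + 1 := by omega
        rw [hsubn, hnormm, mul_zero]
      rw [hz, Nat.sub_self, hABm.A_zero, zero_add, mul_one]
    have hgg0 : olverGG Bp (s+1) 0 = deriv (Bp s) 0 := by
      rw [hggdef]
      exact dslope_same _ _
    have hcont : ContinuousAt
        (fun w => Ap (s+1) w - (2*μ) * olverGG Bp (s+1) w - olverSA μ Bp Am (s+1) w) 0 := by
      have h1 : ContinuousAt (Ap (s+1)) 0 := (hABp.analA (s+1) 0 h0).continuousAt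
      have h2 : ContinuousAt (olverGG Bp (s+1)) 0 := by
        rw [hggdef]
        exact continuousAt_dslope_same.mpr (hBpdiff s 0 h0)
      have h3 : ContinuousAt (olverSA μ Bp Am (s+1)) 0 := (hSAd (s+1) 0 h0).continuousAt
      exact (h1.sub (continuousAt_const.mul h2)).sub h3
    have hval : Ap (s+1) 0 - (2*μ) * olverGG Bp (s+1) 0 - olverSA μ Bp Am (s+1) 0
        = (Pp 0 - (∑ j ∈ Finset.range (s+1), olverGam μ Bp j * Pm (s-j) 0))/2
          - olverGam μ Bp (s+1) := by
      refine olv_eval_const hcont ?_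
      filter_upwards [self_mem_nhdsWithin, mem_nhdsWithin_of_mem_nhds hball0] with w hw hw2
      exact hDconst w hw2 hw
    have hc0 : (Pp 0 - (∑ j ∈ Finset.range (s+1), olverGam μ Bp j * Pm (s-j) 0))/2
        - olverGam μ Bp (s+1) = 0 := by
      rw [hnormp s, hgg0, hSA0val] at hval
      have hgam : olverGam μ Bp (s+1) = -(2*μ) * deriv (Bp s) 0 := rfl
      rw [hgam] at hval ⊢
      linear_combination -hval
    intro z hz
    rcases eq_or_ne z 0 with h | hz0
    · rw [h]
      have hval' := hval
      rw [hc0] at hval'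
      linear_combination hval'
    · have hD := hDconst z hz hz0
      rw [hc0] at hD
      linear_combination hD
  -- main induction
  have main : ∀ s, (∀ z ∈ Metric.ball (0:ℂ) R,
        Ap s z = olverSA μ Bp Am s z + (2*μ) * olverGG Bp s z)
      ∧ (∀ z ∈ Metric.ball (0:ℂ) R, Bp s z = olverSB μ Bp Bm s z) := by
    intro s
    induction s with
    | zero =>
      have hA0 : ∀ z ∈ Metric.ball (0:ℂ) R,
          Ap 0 z = olverSA μ Bp Am 0 z + (2*μ) * olverGG Bp 0 z := by
        intro z _
        rw [hABp.A_zero]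
        simp [olverSA, olverGam, olverGG, hABm.A_zero]
      exact ⟨hA0, stepB 0 hA0⟩
    | succ n ih =>
      have hA := stepA n ih.2
      exact ⟨hA, stepB (n+1) hA⟩
  -- final extraction
  intro s
  have hB := (main s).2
  have h1 : deriv (Bp s) 0 = deriv (olverSB μ Bp Bm s) 0 := by
    have hev : Bp s =ᶠ[𝓝 0] olverSB μ Bp Bm s := by
      filter_upwards [hball0] with w hw
      exact hB w hw
    exact hev.deriv_eq
  have h2 : deriv (olverSB μ Bp Bm s) 0
      = ∑ j ∈ Finset.range (s+1), olverGam μ Bp j * deriv (Bm (s-j)) 0 := hSB' s 0 h0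
  have h3 : ∑ j ∈ Finset.range (s+1), olverGam μ Bp j * deriv (Bm (s-j)) 0
      = deriv (Bm s) 0
        - 2 * μ * ∑ r ∈ Finset.range s, deriv (Bp r) 0 * deriv (Bm (s - 1 - r)) 0 := by
    rw [Finset.sum_range_succ']
    have hf0 : olverGam μ Bp 0 * deriv (Bm (s-0)) 0 = deriv (Bm s) 0 := by
      simp [olverGam]
    rw [hf0]
    have hsum : ∑ r ∈ Finset.range s, olverGam μ Bp (r+1) * deriv (Bm (s-(r+1))) 0
        = -(2 * μ * ∑ r ∈ Finset.range s, deriv (Bp r) 0 * deriv (Bm (s - 1 - r)) 0) := by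
      rw [Finset.mul_sum, ← Finset.sum_neg_distrib]
      refine Finset.sum_congr rfl fun r _ => ?_
      have hidx : s - (r+1) = s - 1 - r := by omega
      have hgam : olverGam μ Bp (r+1) = -(2*μ) * deriv (Bp r) 0 := rfl
      rw [hidx, hgam]
      ring
    rw [hsum]
    ring
  have hfin : deriv (Bp s) 0 = deriv (Bm s) 0
      - 2 * μ * ∑ r ∈ Finset.range s, deriv (Bp r) 0 * deriv (Bm (s - 1 - r)) 0 := by
    rw [h1, h2, h3]
  linear_combination -hfin
end
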